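/- arXiv:1211.0672 — 4 statements merged into one kernel-verified Lean document; each statement's English description precedes it below -/
import Mathlib

section
/- Let K : ℝ² \ Δ → ℂ be a compact Calderón–Zygmund kernel: there exist bounded functions L, S, D : [0,∞) → [0,∞) with L(x) → 0 as x → ∞, S(x) → 0 as x → 0, D(x) → 0 as x → ∞, constants C > 0 and 0 < δ ≤ 1 such that |K(t,x) − K(t',x')| ≤ C·((|t−t'|+|x−x'|)^δ / |t−x|^{1+δ})·L(|t−x|)·S(|t−x|)·D(|t+x|) whenever 2(|t−t'|+|x−x'|) < |t−x|. Assume further that K(t,x) → 0 as |t−x| → ∞. Then there exist bounded functions L̃, S̃, D̃ with the same limit properties (L̃ → 0 at ∞, S̃ → 0 at 0, D̃ → 0 at ∞) such that |K(t,x)| ≤ (1/|t−x|)·L̃(|t−x|)·S̃(|t−x|)·D̃(|t+x|) for all (t,x) off the diagonal. -/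
open Filter
open Finset

/-- A set of admissible functions: bounded, nonnegative, with the limits
`L(x) → 0` as `x → ∞`, `S(x) → 0` as `x → 0`, `D(x) → 0` as `x → ∞`. -/
def Admissible (L S D : ℝ → ℝ) : Prop :=
  (∀ x, 0 ≤ L x) ∧ (∀ x, 0 ≤ S x) ∧ (∀ x, 0 ≤ D x) ∧
  (∃ B : ℝ, ∀ x, L x ≤ B ∧ S x ≤ B ∧ D x ≤ B) ∧
  Tendsto L atTop (nhds 0) ∧
  Tendsto S (nhdsWithin 0 (Set.Ioi 0)) (nhds 0) ∧
  Tendsto D atTop (nhds 0)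

lemma geo_sum (N : ℕ) : ∑ j ∈ Finset.range N, (2/3:ℝ)^j ≤ 3 := by
  have h : ((2:ℝ)/3) ≠ 1 := by norm_num
  rw [geom_sum_eq h]
  have h0 : (0:ℝ) ≤ (2/3:ℝ)^N := by positivity
  have he : ((2/3:ℝ)^N - 1)/(2/3-1) = 3*(1-(2/3)^N) := by ring
  rw [he]; linarith

lemma geo_sum_Ico (J N : ℕ) : ∑ j ∈ Finset.Ico J N, (2/3:ℝ)^j ≤ 3 * (2/3)^J := by
  rcases le_or_gt J N with h | h
  · rw [Finset.sum_Ico_eq_sum_range]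
    have hc : ∀ i ∈ Finset.range (N - J), (2/3:ℝ)^(J+i) = (2/3)^J * (2/3)^i := by
      intro i _; rw [pow_add]
    rw [Finset.sum_congr rfl hc, ← Finset.mul_sum]
    have := geo_sum (N - J)
    nlinarith [pow_nonneg (by norm_num : (0:ℝ) ≤ 2/3) J]
  · rw [Finset.Ico_eq_empty (by omega)]
    simp; positivity

lemma sum_est (N J : ℕ) (P : ℕ → ℝ) (a b : ℝ) (ha : 0 ≤ a) (hb : 0 ≤ b)
    (h1 : ∀ j, j < N → j < J → P j ≤ a) (h2 : ∀ j, j < N → P j ≤ b) :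
    ∑ j ∈ Finset.range N, (2/3:ℝ)^j * P j ≤ 3*a + 3*(2/3)^J*b := by
  have hQ : ∑ j ∈ Finset.range N, (2/3:ℝ)^j * P j
      ≤ ∑ j ∈ Finset.range N, (2/3:ℝ)^j * (if j < J then a else b) := by
    apply Finset.sum_le_sum
    intro j hj
    rw [Finset.mem_range] at hj
    apply mul_le_mul_of_nonneg_left _ (by positivity)
    split
    · exact h1 j hj ‹_›
    · exact h2 j hj
  refine hQ.trans ?_
  rcases le_or_gt N J with h | h
  · have : ∀ j ∈ Finset.range N, (2/3:ℝ)^j * (if j < J then a else b) = (2/3)^j * a := by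
      intro j hj; rw [Finset.mem_range] at hj; rw [if_pos (by omega)]
    rw [Finset.sum_congr rfl this, ← Finset.sum_mul]
    have := geo_sum N
    have h3 : (0:ℝ) ≤ 3*(2/3:ℝ)^J*b := by positivity
    nlinarith
  · rw [Finset.range_eq_Ico, ← Finset.sum_Ico_consecutive _ (Nat.zero_le J) h.le]
    have e1 : ∀ j ∈ Finset.Ico 0 J, (2/3:ℝ)^j * (if j < J then a else b) = (2/3)^j * a := by
      intro j hj; rw [Finset.mem_Ico] at hj; rw [if_pos hj.2]
    have e2 : ∀ j ∈ Finset.Ico J N, (2/3:ℝ)^j * (if j < J then a else b) = (2/3)^j * b := by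
      intro j hj; rw [Finset.mem_Ico] at hj; rw [if_neg (by omega)]
    rw [Finset.sum_congr rfl e1, Finset.sum_congr rfl e2, ← Finset.sum_mul, ← Finset.sum_mul]
    have g1 := geo_sum J
    have g2 := geo_sum_Ico J N
    have n1 : (0:ℝ) ≤ ∑ j ∈ Finset.Ico 0 J, (2/3:ℝ)^j := by positivity
    have n2 : (0:ℝ) ≤ ∑ j ∈ Finset.Ico J N, (2/3:ℝ)^j := by positivity
    rw [← Finset.range_eq_Ico] at *
    nlinarith

lemma tele (K : ℝ → ℝ → ℂ) (L S D : ℝ → ℝ) (C δ : ℝ) (hC : 0 < C) (hδ0 : 0 < δ)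
    (hL0 : ∀ x, 0 ≤ L x) (hS0 : ∀ x, 0 ≤ S x) (hD0 : ∀ x, 0 ≤ D x)
    (hsmooth : ∀ t x t' x' : ℝ, 2 * (|t - t'| + |x - x'|) < |t - x| →
      ‖K t x - K t' x'‖ ≤
        C * ((|t - t'| + |x - x'|) ^ δ / |t - x| ^ (1 + δ)) *
          (L |t - x| * S |t - x| * D |t + x|)) :
    ∀ t x : ℝ, t ≠ x → ∀ N : ℕ,
    ‖K t x‖ * |t - x| ≤ ‖K t (t + (x - t) * (3/2)^N)‖ * |t - x|
      + C * ∑ j ∈ Finset.range N, (2/3:ℝ)^j *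
          (L ((3/2)^(j+1) * |t - x|) * S ((3/2)^(j+1) * |t - x|) *
            D |2*t + (x - t) * (3/2)^(j+1)|) := by
  intro t x ht N
  have hu : 0 < |t - x| := abs_pos.2 (sub_ne_zero.2 ht)
  set u := |t - x| with hu_def
  have habs : ∀ m : ℕ, |t - (t + (x - t) * (3/2)^m)| = (3/2)^m * u := by
    intro m
    have e : t - (t + (x - t) * (3/2)^m) = ((3/2:ℝ)^m) * (t - x) := by ring
    rw [e, abs_mul, abs_of_nonneg (by positivity : (0:ℝ) ≤ (3/2:ℝ)^m)]
  induction N with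
  | zero =>
    simp
  | succ N ih =>
    have hpowpos : (0:ℝ) < (3/2:ℝ)^N := by positivity
    have hdiff : |(t + (x - t) * (3/2)^(N+1)) - (t + (x - t) * (3/2)^N)|
        = (3/2)^N/2 * u := by
      have e : (t + (x - t) * (3/2)^(N+1)) - (t + (x - t) * (3/2)^N)
          = ((3/2:ℝ)^N/2) * (t - x) * (-1) := by rw [pow_succ]; ring
      rw [e, abs_mul, abs_mul, abs_neg, abs_one, mul_one,
        abs_of_nonneg (by positivity : (0:ℝ) ≤ (3/2:ℝ)^N/2)]
    have hcond : 2 * (|t - t| + |(t + (x - t) * (3/2)^(N+1)) - (t + (x - t) * (3/2)^N)|)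
        < |t - (t + (x - t) * (3/2)^(N+1))| := by
      rw [sub_self, abs_zero, zero_add, hdiff, habs (N+1), pow_succ]
      nlinarith
    have h1 := hsmooth t (t + (x - t) * (3/2)^(N+1)) t (t + (x - t) * (3/2)^N) hcond
    rw [sub_self, abs_zero, zero_add, hdiff, habs (N+1)] at h1
    have hb' : (0:ℝ) < (3/2:ℝ)^N/2 * u := by positivity
    have hc' : (0:ℝ) < (3/2:ℝ)^(N+1) * u := by positivity
    have hbc : (3/2:ℝ)^N/2 * u ≤ (3/2:ℝ)^(N+1) * u := by
      rw [pow_succ]; nlinarith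
    have hrp : ((3/2:ℝ)^N/2 * u) ^ δ / ((3/2:ℝ)^(N+1) * u) ^ (1+δ) ≤ (2/3)^N / u := by
      have h2 : ((3/2:ℝ)^N/2 * u) ^ δ ≤ ((3/2:ℝ)^(N+1) * u) ^ δ :=
        Real.rpow_le_rpow hb'.le hbc hδ0.le
      have h3 : ((3/2:ℝ)^N/2 * u) ^ δ / ((3/2:ℝ)^(N+1) * u) ^ (1+δ)
          ≤ ((3/2:ℝ)^(N+1) * u) ^ δ / ((3/2:ℝ)^(N+1) * u) ^ (1+δ) :=
        (div_le_div_iff_of_pos_right (Real.rpow_pos_of_pos hc' _)).2 h2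
      have h4 : ((3/2:ℝ)^(N+1) * u) ^ δ / ((3/2:ℝ)^(N+1) * u) ^ (1+δ)
          = ((3/2:ℝ)^(N+1) * u) ^ (δ - (1+δ)) := (Real.rpow_sub hc' _ _).symm
      have h5 : δ - (1+δ) = (-1 : ℝ) := by ring
      have h6 : ((3/2:ℝ)^(N+1) * u) ^ (-1:ℝ) = ((3/2:ℝ)^(N+1) * u)⁻¹ :=
        Real.rpow_neg_one _
      have h7 : ((3/2:ℝ)^(N+1) * u)⁻¹ ≤ (2/3:ℝ)^N / u := by
        have e1 : ((3/2:ℝ)^(N+1) * u)⁻¹ = (2/3:ℝ)^(N+1) * u⁻¹ := by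
          rw [mul_inv, ← inv_pow]; norm_num
        rw [e1, div_eq_mul_inv ((2/3:ℝ)^N) u]
        apply mul_le_mul_of_nonneg_right _ (inv_nonneg.2 hu.le)
        exact pow_le_pow_of_le_one (by norm_num) (by norm_num) (by omega)
      calc ((3/2:ℝ)^N/2 * u) ^ δ / ((3/2:ℝ)^(N+1) * u) ^ (1+δ)
          ≤ ((3/2:ℝ)^(N+1) * u) ^ δ / ((3/2:ℝ)^(N+1) * u) ^ (1+δ) := h3
        _ = ((3/2:ℝ)^(N+1) * u) ^ (δ - (1+δ)) := h4
        _ = ((3/2:ℝ)^(N+1) * u)⁻¹ := by rw [h5, h6]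
        _ ≤ (2/3:ℝ)^N / u := h7
    -- put together the step bound
    have hPnn : 0 ≤ L ((3/2)^(N+1) * u) * S ((3/2)^(N+1) * u)
        * D |t + (t + (x - t) * (3/2)^(N+1))| :=
      mul_nonneg (mul_nonneg (hL0 _) (hS0 _)) (hD0 _)
    have hstep : ‖K t (t + (x - t) * (3/2)^(N+1)) - K t (t + (x - t) * (3/2)^N)‖ * u
        ≤ C * (2/3)^N * (L ((3/2)^(N+1) * u) * S ((3/2)^(N+1) * u) *
            D |2*t + (x - t) * (3/2)^(N+1)|) := by
      have e2 : t + (t + (x - t) * (3/2)^(N+1)) = 2*t + (x - t) * (3/2)^(N+1) := by ring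
      rw [e2] at h1
      have h8 : ‖K t (t + (x - t) * (3/2)^(N+1)) - K t (t + (x - t) * (3/2)^N)‖ * u
          ≤ (C * (((3/2:ℝ)^N/2 * u) ^ δ / ((3/2:ℝ)^(N+1) * u) ^ (1+δ)) *
            (L ((3/2)^(N+1) * u) * S ((3/2)^(N+1) * u) *
              D |2*t + (x - t) * (3/2)^(N+1)|)) * u :=
        mul_le_mul_of_nonneg_right h1 hu.le
      refine h8.trans ?_
      have h9 : C * (((3/2:ℝ)^N/2 * u) ^ δ / ((3/2:ℝ)^(N+1) * u) ^ (1+δ))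
          ≤ C * ((2/3:ℝ)^N / u) := mul_le_mul_of_nonneg_left hrp hC.le
      have h10 : (C * (((3/2:ℝ)^N/2 * u) ^ δ / ((3/2:ℝ)^(N+1) * u) ^ (1+δ)) *
            (L ((3/2)^(N+1) * u) * S ((3/2)^(N+1) * u) *
              D |2*t + (x - t) * (3/2)^(N+1)|)) * u
          ≤ (C * ((2/3:ℝ)^N / u) *
            (L ((3/2)^(N+1) * u) * S ((3/2)^(N+1) * u) *
              D |2*t + (x - t) * (3/2)^(N+1)|)) * u := by
        apply mul_le_mul_of_nonneg_right _ hu.le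
        exact mul_le_mul_of_nonneg_right h9 (by rw [e2] at hPnn; exact hPnn)
      refine h10.trans (le_of_eq ?_)
      field_simp
    -- triangle inequality
    have htri : ‖K t (t + (x - t) * (3/2)^N)‖ * u
        ≤ ‖K t (t + (x - t) * (3/2)^(N+1))‖ * u
          + ‖K t (t + (x - t) * (3/2)^(N+1)) - K t (t + (x - t) * (3/2)^N)‖ * u := by
      have h := norm_sub_le (K t (t + (x - t) * (3/2)^(N+1)))
        (K t (t + (x - t) * (3/2)^(N+1)) - K t (t + (x - t) * (3/2)^N))
      rw [sub_sub_cancel] at h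
      have h2 := mul_le_mul_of_nonneg_right h hu.le
      rw [add_mul] at h2
      exact h2
    rw [Finset.sum_range_succ]
    calc ‖K t x‖ * u
        ≤ ‖K t (t + (x - t) * (3/2)^N)‖ * u
          + C * ∑ j ∈ Finset.range N, (2/3:ℝ)^j *
            (L ((3/2)^(j+1) * u) * S ((3/2)^(j+1) * u) *
              D |2*t + (x - t) * (3/2)^(j+1)|) := ih
      _ ≤ (‖K t (t + (x - t) * (3/2)^(N+1))‖ * u
            + C * (2/3)^N * (L ((3/2)^(N+1) * u) * S ((3/2)^(N+1) * u) *
              D |2*t + (x - t) * (3/2)^(N+1)|))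
          + C * ∑ j ∈ Finset.range N, (2/3:ℝ)^j *
            (L ((3/2)^(j+1) * u) * S ((3/2)^(j+1) * u) *
              D |2*t + (x - t) * (3/2)^(j+1)|) := by
          have := htri.trans (by linarith [hstep] :
            ‖K t (t + (x - t) * (3/2)^(N+1))‖ * u
              + ‖K t (t + (x - t) * (3/2)^(N+1)) - K t (t + (x - t) * (3/2)^N)‖ * u
            ≤ ‖K t (t + (x - t) * (3/2)^(N+1))‖ * u
              + C * (2/3)^N * (L ((3/2)^(N+1) * u) * S ((3/2)^(N+1) * u) *
                D |2*t + (x - t) * (3/2)^(N+1)|))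
          linarith
      _ = ‖K t (t + (x - t) * (3/2)^(N+1))‖ * u
          + C * (∑ j ∈ Finset.range N, (2/3:ℝ)^j *
            (L ((3/2)^(j+1) * u) * S ((3/2)^(j+1) * u) *
              D |2*t + (x - t) * (3/2)^(j+1)|)
            + (2/3)^N * (L ((3/2)^(N+1) * u) * S ((3/2)^(N+1) * u) *
              D |2*t + (x - t) * (3/2)^(N+1)|)) := by ring

/-- If `K` is a compact Calderón–Zygmund kernel vanishing at infinity in the
direction perpendicular to the diagonal, then it satisfies the pointwise decay
`|K(t,x)| ≤ |t−x|⁻¹ L̃(|t−x|) S̃(|t−x|) D̃(|t+x|)` with admissible `L̃, S̃, D̃`. -/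
theorem statement0 (K : ℝ → ℝ → ℂ) (L S D : ℝ → ℝ) (hLSD : Admissible L S D)
    (C δ : ℝ) (hC : 0 < C) (hδ0 : 0 < δ) (hδ1 : δ ≤ 1)
    (hsmooth : ∀ t x t' x' : ℝ, 2 * (|t - t'| + |x - x'|) < |t - x| →
      ‖K t x - K t' x'‖ ≤
        C * ((|t - t'| + |x - x'|) ^ δ / |t - x| ^ (1 + δ)) *
          (L |t - x| * S |t - x| * D |t + x|))
    (hvanish : ∀ ε > 0, ∃ R : ℝ, ∀ t x : ℝ, R ≤ |t - x| → ‖K t x‖ ≤ ε) :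
    ∃ L' S' D' : ℝ → ℝ, Admissible L' S' D' ∧
      ∀ t x : ℝ, t ≠ x →
        ‖K t x‖ ≤ (1 / |t - x|) * (L' |t - x| * S' |t - x| * D' |t + x|) := by
  obtain ⟨hL0, hS0, hD0, ⟨B₀, hB₀⟩, hLtop, hStop, hDtop⟩ := hLSD
  set B := max B₀ 1 with hBdef
  have hB1 : (1:ℝ) ≤ B := le_max_right _ _
  have hB0 : (0:ℝ) ≤ B := by linarith
  have hLB : ∀ s, L s ≤ B := fun s => ((hB₀ s).1).trans (le_max_left _ _)
  have hSB : ∀ s, S s ≤ B := fun s => ((hB₀ s).2.1).trans (le_max_left _ _)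
  have hDB : ∀ s, D s ≤ B := fun s => ((hB₀ s).2.2).trans (le_max_left _ _)
  have htele := tele K L S D C δ hC hδ0 hL0 hS0 hD0 hsmooth
  have habs : ∀ t x : ℝ, ∀ m : ℕ, |t - (t + (x - t) * (3/2)^m)| = (3/2)^m * |t - x| := by
    intro t x m
    have e : t - (t + (x - t) * (3/2)^m) = ((3/2:ℝ)^m) * (t - x) := by ring
    rw [e, abs_mul, abs_of_nonneg (by positivity : (0:ℝ) ≤ (3/2:ℝ)^m)]
  -- reformulated limit hypotheses
  have hLtop' : ∀ ε > 0, ∃ W : ℝ, ∀ s, W ≤ s → L s ≤ ε := by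
    intro ε hε
    obtain ⟨W, hW⟩ := (Metric.tendsto_atTop.1 hLtop) ε hε
    refine ⟨W, fun s hs => ?_⟩
    have := hW s hs
    rw [Real.dist_eq, sub_zero, abs_of_nonneg (hL0 s)] at this
    linarith
  have hDtop' : ∀ ε > 0, ∃ W : ℝ, ∀ s, W ≤ s → D s ≤ ε := by
    intro ε hε
    obtain ⟨W, hW⟩ := (Metric.tendsto_atTop.1 hDtop) ε hε
    refine ⟨W, fun s hs => ?_⟩
    have := hW s hs
    rw [Real.dist_eq, sub_zero, abs_of_nonneg (hD0 s)] at this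
    linarith
  have hStop' : ∀ ε > 0, ∃ η > 0, ∀ s, 0 < s → s < η → S s ≤ ε := by
    intro ε hε
    obtain ⟨η, hη, hball⟩ := Metric.tendsto_nhdsWithin_nhds.1 hStop ε hε
    refine ⟨η, hη, fun s hs hsη => ?_⟩
    have := hball (Set.mem_Ioi.2 hs) (by rw [Real.dist_eq, sub_zero, abs_of_pos hs]; exact hsη)
    rw [Real.dist_eq, sub_zero, abs_of_nonneg (hS0 s)] at this
    linarith
  -- boundary term control
  have hbdry : ∀ t x : ℝ, t ≠ x → ∀ ε > 0, ∃ N : ℕ,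
      ‖K t (t + (x - t) * (3/2)^N)‖ * |t - x| ≤ ε := by
    intro t x ht ε hε
    have hu : 0 < |t - x| := abs_pos.2 (sub_ne_zero.2 ht)
    obtain ⟨R, hR⟩ := hvanish (ε / |t - x|) (by positivity)
    obtain ⟨N, hN⟩ := pow_unbounded_of_one_lt (R / |t - x|) (by norm_num : (1:ℝ) < 3/2)
    refine ⟨N, ?_⟩
    have hRe : R ≤ |t - (t + (x - t) * (3/2)^N)| := by
      rw [habs t x N]; rw [div_lt_iff₀ hu] at hN; linarith
    have h1 := hR t _ hRe
    calc ‖K t (t + (x - t) * (3/2)^N)‖ * |t - x| ≤ (ε / |t - x|) * |t - x| :=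
          mul_le_mul_of_nonneg_right h1 hu.le
      _ = ε := by field_simp
  -- nonnegativity and boundedness of the summands
  have hPnn : ∀ (j : ℕ) (t x : ℝ), 0 ≤ L ((3/2)^(j+1) * |t - x|) * S ((3/2)^(j+1) * |t - x|) *
      D |2*t + (x - t) * (3/2)^(j+1)| :=
    fun j t x => mul_nonneg (mul_nonneg (hL0 _) (hS0 _)) (hD0 _)
  have hPB : ∀ (j : ℕ) (t x : ℝ), L ((3/2)^(j+1) * |t - x|) * S ((3/2)^(j+1) * |t - x|) *
      D |2*t + (x - t) * (3/2)^(j+1)| ≤ B*B*B :=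
    fun j t x => mul_le_mul (mul_le_mul (hLB _) (hSB _) (hS0 _) hB0) (hDB _) (hD0 _)
      (by positivity)
  -- Claim 1 : global bound
  have claim1 : ∀ t x : ℝ, t ≠ x → ‖K t x‖ * |t - x| ≤ 3*C*(B*B*B) := by
    intro t x ht
    refine le_of_forall_pos_le_add ?_
    intro ε hε
    obtain ⟨N, hN⟩ := hbdry t x ht ε hε
    have hk := htele t x ht N
    have hsum := sum_est N 0 _ 0 (B*B*B) le_rfl (by positivity)
      (fun j _ hj0 => absurd hj0 (by omega)) (fun j _ => hPB j t x)
    have hmul : C * ∑ j ∈ Finset.range N, (2/3:ℝ)^j *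
        (L ((3/2)^(j+1) * |t - x|) * S ((3/2)^(j+1) * |t - x|) *
          D |2*t + (x - t) * (3/2)^(j+1)|) ≤ C * (3*0 + 3*(2/3:ℝ)^0*(B*B*B)) :=
      mul_le_mul_of_nonneg_left hsum hC.le
    norm_num at hmul
    linarith
  -- Claim 3 : decay as |t-x| → ∞
  have claim3 : ∀ ε > 0, ∃ U : ℝ, ∀ t x : ℝ, t ≠ x → U ≤ |t - x| →
      ‖K t x‖ * |t - x| ≤ ε := by
    intro ε hε
    have hd : (0:ℝ) < 6*C*B*B+1 := by positivity
    set ε₃ := ε/(6*C*B*B+1) with hε₃def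
    have hε₃ : 0 < ε₃ := by positivity
    have hε₃id : ε₃ * (6*C*B*B+1) = ε := div_mul_cancel₀ _ hd.ne'
    obtain ⟨W, hW⟩ := hLtop' ε₃ hε₃
    refine ⟨W, fun t x ht hUu => ?_⟩
    obtain ⟨N, hN⟩ := hbdry t x ht (ε/2) (by positivity)
    have hk := htele t x ht N
    have hP : ∀ j, j < N → L ((3/2)^(j+1) * |t - x|) * S ((3/2)^(j+1) * |t - x|) *
        D |2*t + (x - t) * (3/2)^(j+1)| ≤ ε₃*B*B := by
      intro j _
      have h1 : W ≤ (3/2)^(j+1) * |t - x| := by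
        refine hUu.trans (le_mul_of_one_le_left (abs_nonneg _) ?_)
        exact one_le_pow₀ (by norm_num)
      exact mul_le_mul (mul_le_mul (hW _ h1) (hSB _) (hS0 _) hε₃.le) (hDB _) (hD0 _)
        (by positivity)
    have hsum := sum_est N 0 _ 0 (ε₃*B*B) le_rfl (by positivity)
      (fun j _ hj0 => absurd hj0 (by omega)) hP
    have hmul : C * ∑ j ∈ Finset.range N, (2/3:ℝ)^j *
        (L ((3/2)^(j+1) * |t - x|) * S ((3/2)^(j+1) * |t - x|) *
          D |2*t + (x - t) * (3/2)^(j+1)|) ≤ C * (3*0 + 3*(2/3:ℝ)^0*(ε₃*B*B)) :=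
      mul_le_mul_of_nonneg_left hsum hC.le
    norm_num at hmul
    have hle2 : C * (3*(ε₃*B*B)) ≤ ε/2 := by linarith [hε₃id, hε₃.le]
    linarith
  -- Claim 2 : decay as |t-x| → 0
  have claim2 : ∀ ε > 0, ∃ η > 0, ∀ t x : ℝ, t ≠ x → |t - x| ≤ η →
      ‖K t x‖ * |t - x| ≤ ε := by
    intro ε hε
    have hd : (0:ℝ) < 12*C*(B*B*B)+1 := by positivity
    set ε₃ := ε/(12*C*(B*B*B)+1) with hε₃def
    have hε₃ : 0 < ε₃ := by positivity
    have hε₃id : ε₃ * (12*C*(B*B*B)+1) = ε := div_mul_cancel₀ _ hd.ne'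
    obtain ⟨η₀, hη₀, hS'⟩ := hStop' ε₃ hε₃
    obtain ⟨J, hJ⟩ := exists_pow_lt_of_lt_one hε₃ (by norm_num : (2:ℝ)/3 < 1)
    refine ⟨η₀ * (2/3)^J / 2, by positivity, fun t x ht hle => ?_⟩
    have hu : 0 < |t - x| := abs_pos.2 (sub_ne_zero.2 ht)
    obtain ⟨N, hN⟩ := hbdry t x ht (ε/2) (by positivity)
    have hk := htele t x ht N
    have h1 : ∀ j, j < N → j < J → L ((3/2)^(j+1) * |t - x|) * S ((3/2)^(j+1) * |t - x|) *
        D |2*t + (x - t) * (3/2)^(j+1)| ≤ B*ε₃*B := by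
      intro j _ hjJ
      have hpe : (3/2:ℝ)^J * (2/3)^J = 1 := by rw [← mul_pow]; norm_num
      have hmono : (3/2:ℝ)^(j+1) ≤ (3/2)^J := pow_le_pow_right₀ (by norm_num) (by omega)
      have hJpos : (0:ℝ) < (3/2:ℝ)^J := by positivity
      have hsmall : (3/2:ℝ)^(j+1) * |t - x| < η₀ := by
        have c1 : (3/2:ℝ)^(j+1) * |t - x| ≤ (3/2)^J * |t - x| :=
          mul_le_mul_of_nonneg_right hmono (abs_nonneg _)
        have c2 : (3/2:ℝ)^J * |t - x| ≤ (3/2)^J * (η₀ * (2/3)^J / 2) :=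
          mul_le_mul_of_nonneg_left hle (by positivity)
        have c3 : (3/2:ℝ)^J * (η₀ * (2/3)^J / 2) = η₀/2 := by
          have e : (3/2:ℝ)^J * (η₀ * (2/3)^J / 2) = η₀ * ((3/2:ℝ)^J * (2/3)^J) / 2 := by ring
          rw [e, hpe, mul_one]
        linarith
      have hSs : S ((3/2)^(j+1) * |t - x|) ≤ ε₃ := hS' _ (by positivity) hsmall
      exact mul_le_mul (mul_le_mul (hLB _) hSs (hS0 _) hB0) (hDB _) (hD0 _) (by positivity)
    have hsum := sum_est N J _ (B*ε₃*B) (B*B*B) (by positivity) (by positivity)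
      h1 (fun j _ => hPB j t x)
    have hmul : C * ∑ j ∈ Finset.range N, (2/3:ℝ)^j *
        (L ((3/2)^(j+1) * |t - x|) * S ((3/2)^(j+1) * |t - x|) *
          D |2*t + (x - t) * (3/2)^(j+1)|) ≤ C * (3*(B*ε₃*B) + 3*(2/3:ℝ)^J*(B*B*B)) :=
      mul_le_mul_of_nonneg_left hsum hC.le
    have hBBB : (0:ℝ) ≤ B*B*B := by positivity
    have ha2 : 3*(B*ε₃*B) ≤ 3*(ε₃*(B*B*B)) := by
      linarith [mul_nonneg (mul_nonneg hε₃.le (mul_nonneg hB0 hB0)) (sub_nonneg.2 hB1)]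
    have hJB : 3*(2/3:ℝ)^J*(B*B*B) ≤ 3*(ε₃*(B*B*B)) := by
      linarith [mul_le_mul_of_nonneg_right hJ.le hBBB]
    have hmul2 : C * (3*(B*ε₃*B) + 3*(2/3:ℝ)^J*(B*B*B)) ≤ C * (6*(ε₃*(B*B*B))) :=
      mul_le_mul_of_nonneg_left (by linarith) hC.le
    have hle2 : C * (6*(ε₃*(B*B*B))) ≤ ε/2 := by linarith [hε₃id, hε₃.le]
    linarith
  -- Claim 4 : decay as |t+x| → ∞
  have claim4 : ∀ ε > 0, ∃ V : ℝ, ∀ t x : ℝ, t ≠ x → V ≤ |t + x| →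
      ‖K t x‖ * |t - x| ≤ ε := by
    intro ε hε
    obtain ⟨U, hU⟩ := claim3 ε hε
    set U' := max U 1 with hU'def
    have hU'1 : (1:ℝ) ≤ U' := le_max_right _ _
    have hU'0 : (0:ℝ) < U' := by linarith
    have hd : (0:ℝ) < 6*C*B*B+1 := by positivity
    set ε₃ := ε/(6*C*B*B+1) with hε₃def
    have hε₃ : 0 < ε₃ := by positivity
    have hε₃id : ε₃ * (6*C*B*B+1) = ε := div_mul_cancel₀ _ hd.ne'
    obtain ⟨W, hW⟩ := hDtop' ε₃ hε₃
    obtain ⟨R, hR⟩ := hvanish (ε/(2*U')) (by positivity)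
    set R₀ := max R 1 with hR₀def
    have hR₀1 : (1:ℝ) ≤ R₀ := le_max_right _ _
    refine ⟨W + (3/2)*R₀, fun t x ht hV => ?_⟩
    have hu : 0 < |t - x| := abs_pos.2 (sub_ne_zero.2 ht)
    rcases le_or_gt U' |t - x| with hcase | hcase
    · exact hU t x ht ((le_max_left _ _).trans hcase)
    · have hex : ∃ N : ℕ, R₀ ≤ (3/2)^N * |t - x| := by
        obtain ⟨N, hN⟩ := pow_unbounded_of_one_lt (R₀ / |t - x|) (by norm_num : (1:ℝ) < 3/2)
        exact ⟨N, by rw [div_lt_iff₀ hu] at hN; linarith⟩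
      set N := Nat.find hex with hNdef
      have hNspec : R₀ ≤ (3/2)^N * |t - x| := Nat.find_spec hex
      have hk := htele t x ht N
      -- boundary term
      have hb : ‖K t (t + (x - t) * (3/2)^N)‖ * |t - x| ≤ ε/2 := by
        have hRe : R ≤ |t - (t + (x - t) * (3/2)^N)| := by
          rw [habs t x N]; exact (le_max_left _ _).trans hNspec
        have h1 := hR t _ hRe
        have h2 : ‖K t (t + (x - t) * (3/2)^N)‖ * |t - x| ≤ (ε/(2*U')) * U' :=
          mul_le_mul h1 hcase.le hu.le (by positivity)
        have h3 : (ε/(2*U')) * U' = ε/2 := by field_simp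
        linarith
      -- sum term
      have hDj : ∀ j, j < N → W ≤ |2*t + (x - t) * (3/2)^(j+1)| := by
        intro j hj
        have hN1 : ∃ n, N = n + 1 := ⟨N - 1, by omega⟩
        obtain ⟨n, hn⟩ := hN1
        have hmin : ¬ (R₀ ≤ (3/2)^n * |t - x|) := Nat.find_min hex (by omega)
        push_neg at hmin
        have hmono : (3/2:ℝ)^(j+1) ≤ (3/2)^(n+1) := pow_le_pow_right₀ (by norm_num) (by omega)
        have hsz : (3/2:ℝ)^(j+1) * |t - x| < (3/2)*R₀ := by
          calc (3/2:ℝ)^(j+1) * |t - x| ≤ (3/2)^(n+1) * |t - x| :=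
                mul_le_mul_of_nonneg_right hmono (abs_nonneg _)
            _ = (3/2) * ((3/2)^n * |t - x|) := by rw [pow_succ]; ring
            _ < (3/2) * R₀ := by linarith
        have hone : (1:ℝ) ≤ (3/2:ℝ)^(j+1) := one_le_pow₀ (by norm_num)
        have habs2 : |(x - t) * ((3/2)^(j+1) - 1)| ≤ (3/2)*R₀ := by
          rw [abs_mul, abs_of_nonneg (by linarith : (0:ℝ) ≤ (3/2:ℝ)^(j+1) - 1),
            abs_sub_comm x t]
          calc |t - x| * ((3/2:ℝ)^(j+1) - 1) ≤ |t - x| * (3/2)^(j+1) := by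
                apply mul_le_mul_of_nonneg_left (by linarith) (abs_nonneg _)
            _ = (3/2)^(j+1) * |t - x| := by ring
            _ ≤ (3/2)*R₀ := hsz.le
        have htri2 : |t + x| ≤ |2*t + (x - t) * (3/2)^(j+1)| + |(x - t) * ((3/2)^(j+1) - 1)| := by
          have e2 : t + x = (2*t + (x - t) * (3/2)^(j+1)) + (-((x - t) * ((3/2)^(j+1) - 1))) := by
            ring
          rw [e2]
          refine (abs_add_le _ _).trans ?_
          rw [abs_neg]
        linarith
      have hP : ∀ j, j < N → L ((3/2)^(j+1) * |t - x|) * S ((3/2)^(j+1) * |t - x|) *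
          D |2*t + (x - t) * (3/2)^(j+1)| ≤ B*B*ε₃ := by
        intro j hj
        exact mul_le_mul (mul_le_mul (hLB _) (hSB _) (hS0 _) hB0) (hW _ (hDj j hj)) (hD0 _)
          (by positivity)
      have hsum := sum_est N 0 _ 0 (B*B*ε₃) le_rfl (by positivity)
        (fun j _ hj0 => absurd hj0 (by omega)) hP
      have hmul : C * ∑ j ∈ Finset.range N, (2/3:ℝ)^j *
          (L ((3/2)^(j+1) * |t - x|) * S ((3/2)^(j+1) * |t - x|) *
            D |2*t + (x - t) * (3/2)^(j+1)|) ≤ C * (3*0 + 3*(2/3:ℝ)^0*(B*B*ε₃)) :=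
        mul_le_mul_of_nonneg_left hsum hC.le
      norm_num at hmul
      have hle2 : C * (3*(B*B*ε₃)) ≤ ε/2 := by linarith [hε₃id, hε₃.le]
      linarith
  -- construction of the admissible majorants via suprema
  set M := 3*C*(B*B*B) with hMdef
  have hM0 : (0:ℝ) ≤ M := by positivity
  have hub1 : ∀ u : ℝ, ∀ y ∈ {y : ℝ | ∃ t x : ℝ, t ≠ x ∧ |t - x| ≤ u ∧ y = ‖K t x‖ * |t - x|},
      y ≤ M := by
    rintro u y ⟨t, x, ht, -, rfl⟩; exact claim1 t x ht
  have hub2 : ∀ u : ℝ, ∀ y ∈ {y : ℝ | ∃ t x : ℝ, t ≠ x ∧ u ≤ |t - x| ∧ y = ‖K t x‖ * |t - x|},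
      y ≤ M := by
    rintro u y ⟨t, x, ht, -, rfl⟩; exact claim1 t x ht
  have hub3 : ∀ v : ℝ, ∀ y ∈ {y : ℝ | ∃ t x : ℝ, t ≠ x ∧ v ≤ |t + x| ∧ y = ‖K t x‖ * |t - x|},
      y ≤ M := by
    rintro v y ⟨t, x, ht, -, rfl⟩; exact claim1 t x ht
  have hnn1 : ∀ u : ℝ, ∀ y ∈ {y : ℝ | ∃ t x : ℝ, t ≠ x ∧ |t - x| ≤ u ∧ y = ‖K t x‖ * |t - x|},
      (0:ℝ) ≤ y := by
    rintro u y ⟨t, x, ht, -, rfl⟩; positivity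
  have hnn2 : ∀ u : ℝ, ∀ y ∈ {y : ℝ | ∃ t x : ℝ, t ≠ x ∧ u ≤ |t - x| ∧ y = ‖K t x‖ * |t - x|},
      (0:ℝ) ≤ y := by
    rintro u y ⟨t, x, ht, -, rfl⟩; positivity
  have hnn3 : ∀ v : ℝ, ∀ y ∈ {y : ℝ | ∃ t x : ℝ, t ≠ x ∧ v ≤ |t + x| ∧ y = ‖K t x‖ * |t - x|},
      (0:ℝ) ≤ y := by
    rintro v y ⟨t, x, ht, -, rfl⟩; positivity
  refine ⟨fun u => if u ≤ 1 then Real.sqrt M + 1 else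
      Real.sqrt (sSup {y : ℝ | ∃ t x : ℝ, t ≠ x ∧ u ≤ |t - x| ∧ y = ‖K t x‖ * |t - x|}),
    fun u => if 1 ≤ u then Real.sqrt M + 1 else
      Real.sqrt (sSup {y : ℝ | ∃ t x : ℝ, t ≠ x ∧ |t - x| ≤ u ∧ y = ‖K t x‖ * |t - x|}),
    fun v => Real.sqrt (sSup {y : ℝ | ∃ t x : ℝ, t ≠ x ∧ v ≤ |t + x| ∧ y = ‖K t x‖ * |t - x|}),
    ⟨?_, ?_, ?_, ⟨Real.sqrt M + 1, ?_⟩, ?_, ?_, ?_⟩, ?_⟩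
  · intro u
    dsimp only
    split
    · positivity
    · exact Real.sqrt_nonneg _
  · intro u
    dsimp only
    split
    · positivity
    · exact Real.sqrt_nonneg _
  · intro v
    exact Real.sqrt_nonneg _
  · -- boundedness
    intro u
    have hsq : ∀ s : Set ℝ, (∀ y ∈ s, y ≤ M) → Real.sqrt (sSup s) ≤ Real.sqrt M + 1 := by
      intro s hs
      have := Real.sqrt_le_sqrt (Real.sSup_le hs hM0)
      linarith
    refine ⟨?_, ?_, hsq _ (hub3 u)⟩
    · dsimp only; split
      · exact le_rfl
      · exact hsq _ (hub2 u)
    · dsimp only; split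
      · exact le_rfl
      · exact hsq _ (hub1 u)
  · -- L' tends to 0 at infinity
    rw [Metric.tendsto_atTop]
    intro ε hε
    obtain ⟨U, hU⟩ := claim3 ((ε/2)^2) (by positivity)
    refine ⟨max U 2, fun u hu => ?_⟩
    have hu2 : ¬ (u ≤ 1) := by
      have := le_trans (le_max_right U 2) hu; linarith
    have hsup : sSup {y : ℝ | ∃ t x : ℝ, t ≠ x ∧ u ≤ |t - x| ∧ y = ‖K t x‖ * |t - x|}
        ≤ (ε/2)^2 := by
      refine Real.sSup_le ?_ (by positivity)
      rintro y ⟨t, x, ht, hle, rfl⟩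
      exact hU t x ht (((le_max_left U 2).trans hu).trans hle)
    have h1 : Real.sqrt (sSup {y : ℝ | ∃ t x : ℝ, t ≠ x ∧ u ≤ |t - x| ∧ y = ‖K t x‖ * |t - x|})
        ≤ ε/2 := by
      have := Real.sqrt_le_sqrt hsup
      rwa [Real.sqrt_sq (by positivity : (0:ℝ) ≤ ε/2)] at this
    rw [if_neg hu2, Real.dist_eq, sub_zero, abs_of_nonneg (Real.sqrt_nonneg _)]
    linarith
  · -- S' tends to 0 at 0+
    rw [Metric.tendsto_nhdsWithin_nhds]
    intro ε hε
    obtain ⟨η, hη, hcl⟩ := claim2 ((ε/2)^2) (by positivity)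
    refine ⟨min η 1, by positivity, ?_⟩
    intro u hu hd
    have hu0 : 0 < u := hu
    have hud : u < min η 1 := by rwa [Real.dist_eq, sub_zero, abs_of_pos hu0] at hd
    have hu1 : ¬ (1 ≤ u) := by
      have := lt_min_iff.1 hud; linarith [this.2]
    have hsup : sSup {y : ℝ | ∃ t x : ℝ, t ≠ x ∧ |t - x| ≤ u ∧ y = ‖K t x‖ * |t - x|}
        ≤ (ε/2)^2 := by
      refine Real.sSup_le ?_ (by positivity)
      rintro y ⟨t, x, ht, hle, rfl⟩
      exact hcl t x ht (hle.trans (le_of_lt (lt_of_lt_of_le hud (min_le_left _ _))))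
    have h1 : Real.sqrt (sSup {y : ℝ | ∃ t x : ℝ, t ≠ x ∧ |t - x| ≤ u ∧ y = ‖K t x‖ * |t - x|})
        ≤ ε/2 := by
      have := Real.sqrt_le_sqrt hsup
      rwa [Real.sqrt_sq (by positivity : (0:ℝ) ≤ ε/2)] at this
    rw [if_neg hu1, Real.dist_eq, sub_zero, abs_of_nonneg (Real.sqrt_nonneg _)]
    linarith
  · -- D' tends to 0 at infinity
    rw [Metric.tendsto_atTop]
    intro ε hε
    obtain ⟨V, hV⟩ := claim4 ((ε/2)^2) (by positivity)
    refine ⟨V, fun v hv => ?_⟩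
    have hsup : sSup {y : ℝ | ∃ t x : ℝ, t ≠ x ∧ v ≤ |t + x| ∧ y = ‖K t x‖ * |t - x|}
        ≤ (ε/2)^2 := by
      refine Real.sSup_le ?_ (by positivity)
      rintro y ⟨t, x, ht, hle, rfl⟩
      exact hV t x ht (hv.trans hle)
    have h1 : Real.sqrt (sSup {y : ℝ | ∃ t x : ℝ, t ≠ x ∧ v ≤ |t + x| ∧ y = ‖K t x‖ * |t - x|})
        ≤ ε/2 := by
      have := Real.sqrt_le_sqrt hsup
      rwa [Real.sqrt_sq (by positivity : (0:ℝ) ≤ ε/2)] at this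
    rw [Real.dist_eq, sub_zero, abs_of_nonneg (Real.sqrt_nonneg _)]
    linarith
  · -- the pointwise bound
    intro t x ht
    have hu : 0 < |t - x| := abs_pos.2 (sub_ne_zero.2 ht)
    beta_reduce
    set a1 := sSup {y : ℝ | ∃ t' x' : ℝ, t' ≠ x' ∧ |t' - x'| ≤ |t - x| ∧
      y = ‖K t' x'‖ * |t' - x'|} with ha1
    set a2 := sSup {y : ℝ | ∃ t' x' : ℝ, t' ≠ x' ∧ |t - x| ≤ |t' - x'| ∧
      y = ‖K t' x'‖ * |t' - x'|} with ha2
    set a3 := sSup {y : ℝ | ∃ t' x' : ℝ, t' ≠ x' ∧ |t + x| ≤ |t' + x'| ∧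
      y = ‖K t' x'‖ * |t' - x'|} with ha3
    clear_value a1 a2 a3
    have hgnn : (0:ℝ) ≤ ‖K t x‖ * |t - x| := by positivity
    have hgM : ‖K t x‖ * |t - x| ≤ M := claim1 t x ht
    have hg1 : ‖K t x‖ * |t - x| ≤ a1 := by
      rw [ha1]; exact le_csSup ⟨M, fun y hy => hub1 (|t - x|) y hy⟩ ⟨t, x, ht, le_rfl, rfl⟩
    have hg2 : ‖K t x‖ * |t - x| ≤ a2 := by
      rw [ha2]; exact le_csSup ⟨M, fun y hy => hub2 (|t - x|) y hy⟩ ⟨t, x, ht, le_rfl, rfl⟩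
    have hg3 : ‖K t x‖ * |t - x| ≤ a3 := by
      rw [ha3]; exact le_csSup ⟨M, fun y hy => hub3 (|t + x|) y hy⟩ ⟨t, x, ht, le_rfl, rfl⟩
    have hgg : ‖K t x‖ * |t - x| =
        Real.sqrt (‖K t x‖ * |t - x|) * Real.sqrt (‖K t x‖ * |t - x|) :=
      (Real.mul_self_sqrt hgnn).symm
    have hsg3 : Real.sqrt (‖K t x‖ * |t - x|) ≤ Real.sqrt a3 := Real.sqrt_le_sqrt hg3
    have hMs : Real.sqrt (‖K t x‖ * |t - x|) ≤ Real.sqrt M + 1 := by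
      linarith [Real.sqrt_le_sqrt hgM]
    have hone : (1:ℝ) ≤ Real.sqrt M + 1 := by
      have := Real.sqrt_nonneg M; linarith
    have key2 : ‖K t x‖ * |t - x| ≤
        (if |t - x| ≤ 1 then Real.sqrt M + 1 else Real.sqrt a2) *
        (if 1 ≤ |t - x| then Real.sqrt M + 1 else Real.sqrt a1) * Real.sqrt a3 := by
      have hc2 : Real.sqrt (‖K t x‖ * |t - x|) ≤
          (if 1 ≤ |t - x| then Real.sqrt M + 1 else Real.sqrt a1) := by
        split
        · exact hMs
        · exact Real.sqrt_le_sqrt hg1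
      have hc1 : Real.sqrt (‖K t x‖ * |t - x|) ≤
          (if |t - x| ≤ 1 then Real.sqrt M + 1 else Real.sqrt a2) := by
        split
        · exact hMs
        · exact Real.sqrt_le_sqrt hg2
      have hc1nn : 0 ≤ (if |t - x| ≤ 1 then Real.sqrt M + 1 else Real.sqrt a2) := by
        split
        · linarith
        · exact Real.sqrt_nonneg _
      have hc2nn : 0 ≤ (if 1 ≤ |t - x| then Real.sqrt M + 1 else Real.sqrt a1) := by
        split
        · linarith
        · exact Real.sqrt_nonneg _
      rcases le_or_gt (|t - x|) 1 with h1 | h1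
      · -- first factor is √M + 1 ≥ 1
        rw [if_pos h1]
        have hstep : ‖K t x‖ * |t - x| ≤
            (if 1 ≤ |t - x| then Real.sqrt M + 1 else Real.sqrt a1) * Real.sqrt a3 := by
          rw [hgg]
          exact mul_le_mul hc2 hsg3 (Real.sqrt_nonneg _) hc2nn
        have := mul_le_mul_of_nonneg_left hone
          (mul_nonneg hc2nn (Real.sqrt_nonneg a3) :
            0 ≤ (if 1 ≤ |t - x| then Real.sqrt M + 1 else Real.sqrt a1) * Real.sqrt a3)
        linarith
      · -- second factor is √M + 1 ≥ 1
        rw [if_neg (not_le.2 h1), if_pos h1.le]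
        have hstep : ‖K t x‖ * |t - x| ≤ Real.sqrt a2 * Real.sqrt a3 := by
          rw [hgg]
          exact mul_le_mul (Real.sqrt_le_sqrt hg2) hsg3 (Real.sqrt_nonneg _)
            (Real.sqrt_nonneg _)
        have := mul_le_mul_of_nonneg_left hone
          (mul_nonneg (Real.sqrt_nonneg a2) (Real.sqrt_nonneg a3) :
            (0:ℝ) ≤ Real.sqrt a2 * Real.sqrt a3)
        linarith
    rw [one_div, ← div_eq_inv_mul, le_div_iff₀ hu]
    exact key2
end

section
/- Let I, J be intervals with |J| ≤ |I|, let N ∈ ℕ, 0 < θ ≤ 1, R ≥ 3, and λ ≥ R^{−1}·(|J|^{−1} diam(I ∪ J))^θ. Let Φ_{λJ} be a smooth cutoff supported in 4λJ with |Φ_{λJ}^{(n)}(x)| ≲ (λ|J|)^{−n}. Then |λJ|^{−1/2}·Φ_{λJ} is an L²-normalized bump function adapted to I with order ⌊θN/4⌋ and constant R^{2N}·(|J|/|I|)^{θN/4 − 1/2}·λ^{(N−1)/2}. -/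
/-- An `L²`-normalized bump function adapted to the interval with center `c` and
length `l`, with constant `C` and order `N`. -/
def IsBump (c l C : ℝ) (N : ℕ) (φ : ℝ → ℝ) : Prop :=
  ContDiff ℝ N φ ∧
    ∀ n ≤ N, ∀ x : ℝ,
      |iteratedDeriv n φ x| ≤ C * l ^ (-(1/2 : ℝ) - n) * (1 + |x - c| / l) ^ (-(N : ℝ))

/-- `diam(I ∪ J)` for intervals given by centers and lengths. -/
noncomputable def diamUnion (c1 l1 c2 l2 : ℝ) : ℝ :=
  max (c1 + l1 / 2) (c2 + l2 / 2) - min (c1 - l1 / 2) (c2 - l2 / 2)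

set_option maxHeartbeats 1000000 in
/-- If `|J| ≤ |I|`, `0 < θ ≤ 1`, `R ≥ 3`, `λ ≥ R⁻¹ (|J|⁻¹ diam(I∪J))^θ` and `Φ_{λJ}`
is a smooth cutoff supported in `4λJ` with `|Φ^{(n)}| ≲ (λ|J|)^{−n}`, then
`|λJ|^{−1/2} Φ_{λJ}` is an `L²`-normalized bump adapted to `I` with order `⌊θN/4⌋`
and constant `R^{2N} (|J|/|I|)^{θN/4 − 1/2} λ^{(N−1)/2}`. -/
theorem statement7 (N : ℕ) :
    ∃ A > 0, ∀ C θ R lam cI lI cJ lJ : ℝ, 0 < C → 0 < θ → θ ≤ 1 → 3 ≤ R →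
      0 < lJ → lJ ≤ lI →
      R⁻¹ * (diamUnion cI lI cJ lJ / lJ) ^ θ ≤ lam →
      ∀ Φ : ℝ → ℝ, ContDiff ℝ N Φ →
        (∀ x : ℝ, 2 * lam * lJ < |x - cJ| → Φ x = 0) →
        (∀ n ≤ N, ∀ x : ℝ, |iteratedDeriv n Φ x| ≤ C * (lam * lJ) ^ (-(n : ℝ))) →
        IsBump cI lI
          (A * C * R ^ (2 * (N : ℝ)) * (lJ / lI) ^ (θ * N / 4 - 1/2) * lam ^ (((N : ℝ) - 1) / 2))
          (⌊θ * (N : ℝ) / 4⌋₊) (fun x => (lam * lJ) ^ (-(1/2 : ℝ)) * Φ x) := by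
  refine ⟨4 ^ N, by positivity, ?_⟩
  intro C θ R lam cI lI cJ lJ hC hθ hθ1 hR hlJ hlJI hlam Φ hΦ hsupp hbound
  have hlI : 0 < lI := hlJ.trans_le hlJI
  have hR0 : (0:ℝ) < R := by linarith
  set D := diamUnion cI lI cJ lJ with hDdef
  have hmax1 : cI + lI / 2 ≤ max (cI + lI / 2) (cJ + lJ / 2) := le_max_left _ _
  have hmax2 : cJ + lJ / 2 ≤ max (cI + lI / 2) (cJ + lJ / 2) := le_max_right _ _
  have hmin1 : min (cI - lI / 2) (cJ - lJ / 2) ≤ cI - lI / 2 := min_le_left _ _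
  have hmin2 : min (cI - lI / 2) (cJ - lJ / 2) ≤ cJ - lJ / 2 := min_le_right _ _
  have hDeq : D = max (cI + lI / 2) (cJ + lJ / 2) - min (cI - lI / 2) (cJ - lJ / 2) := rfl
  have hlID : lI ≤ D := by rw [hDeq]; linarith
  have hccJ : |cJ - cI| ≤ D := by
    rw [abs_sub_le_iff]; constructor <;> (rw [hDeq]; linarith)
  have hs1 : (1:ℝ) ≤ lI / lJ := (one_le_div hlJ).2 hlJI
  have hDlJ1 : lI / lJ ≤ D / lJ := by gcongr
  have hρ1 : (1:ℝ) ≤ D / lJ := hs1.trans hDlJ1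
  have hρ0 : (0:ℝ) < D / lJ := lt_of_lt_of_le one_pos hρ1
  have hlam0 : 0 < lam :=
    lt_of_lt_of_le (mul_pos (inv_pos.2 hR0) (Real.rpow_pos_of_pos hρ0 θ)) hlam
  have hRlam : (D / lJ) ^ θ ≤ R * lam := by
    have h := mul_le_mul_of_nonneg_left hlam hR0.le
    calc (D / lJ) ^ θ = R * (R⁻¹ * (D / lJ) ^ θ) := by field_simp
      _ ≤ R * lam := h
  have hsRlam : (lI / lJ) ^ θ ≤ R * lam :=
    le_trans (Real.rpow_le_rpow (by positivity) hDlJ1 hθ.le) hRlam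
  have hRlam1 : (1:ℝ) ≤ R * lam :=
    le_trans (Real.one_le_rpow hs1 hθ.le) hsRlam
  set u := (R * lam) ^ (1/θ) with hu
  have hu0 : 0 < u := Real.rpow_pos_of_pos (by positivity) _
  have hρu : D / lJ ≤ u := by
    calc D / lJ = ((D / lJ) ^ θ) ^ (1/θ) := by
          rw [← Real.rpow_mul hρ0.le, mul_one_div_cancel hθ.ne', Real.rpow_one]
      _ ≤ u := Real.rpow_le_rpow (by positivity) hRlam (by positivity)
  have hlamu : lam ≤ u := by
    calc lam ≤ R * lam := le_mul_of_one_le_left hlam0.le (by linarith)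
      _ = (R * lam) ^ (1:ℝ) := (Real.rpow_one _).symm
      _ ≤ u := Real.rpow_le_rpow_of_exponent_le hRlam1 (by
          rw [le_div_iff₀ hθ]; linarith)
  set M := ⌊θ * (N:ℝ) / 4⌋₊ with hMdef
  have hMθ : (M:ℝ) ≤ θ * N / 4 := Nat.floor_le (by positivity)
  have hNnn : (0:ℝ) ≤ (N:ℝ) := Nat.cast_nonneg N
  have hMNr : (M:ℝ) ≤ N := by nlinarith
  have hMN : M ≤ N := by exact_mod_cast hMNr
  constructor
  · exact contDiff_const.mul (hΦ.of_le (by exact_mod_cast hMN))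
  · intro n hn x
    have hP : (0:ℝ) < lam * lJ := mul_pos hlam0 hlJ
    have hderiv : iteratedDeriv n (fun z => (lam * lJ) ^ (-(1/2:ℝ)) * Φ z) x
        = (lam * lJ) ^ (-(1/2:ℝ)) * iteratedDeriv n Φ x := by
      simp only [← iteratedDerivWithin_univ]
      exact iteratedDerivWithin_const_mul (Set.mem_univ x) uniqueDiffOn_univ _
        (hΦ.of_le (by exact_mod_cast hn.trans hMN)).contDiffWithinAt
    simp only [hderiv]
    set t := 1 + |x - cI| / lI with ht
    have ht1 : (1:ℝ) ≤ t := le_add_of_nonneg_right (by positivity)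
    have ht0 : (0:ℝ) < t := lt_of_lt_of_le one_pos ht1
    rw [abs_mul, abs_of_nonneg (Real.rpow_nonneg hP.le _)]
    by_cases hx : 2 * lam * lJ < |x - cJ|
    · have hz : iteratedDeriv n Φ x = 0 := by
        have hopen : IsOpen {y : ℝ | 2 * lam * lJ < |y - cJ|} :=
          isOpen_lt continuous_const ((continuous_id.sub continuous_const).abs)
        have hev : Φ =ᶠ[nhds x] (fun _ => 0) := by
          filter_upwards [hopen.mem_nhds hx] with y hy using hsupp y hy
        rw [hev.iteratedDeriv_eq n, iteratedDeriv_eq_iterate,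
          Function.iterate_fixed (by simp [deriv_const']) n]
      rw [hz, abs_zero, mul_zero]
      positivity
    · push_neg at hx
      have habs : |x - cI| ≤ 2 * lam * lJ + D :=
        le_trans (abs_sub_le x cJ cI) (by linarith [hccJ])
      have ht4 : t ≤ 4 * u / (lI / lJ) := by
        rw [le_div_iff₀ (by positivity)]
        have he : t * (lI / lJ) = lI / lJ + |x - cI| / lJ := by
          rw [ht]; field_simp
        rw [he]
        have h2 : |x - cI| / lJ ≤ (2 * lam * lJ + D) / lJ := by gcongr
        have h3 : (2 * lam * lJ + D) / lJ = 2 * lam + D / lJ := by field_simp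
        have h4 : lI / lJ ≤ u := hDlJ1.trans hρu
        calc lI / lJ + |x - cI| / lJ ≤ u + (2 * lam + D / lJ) := by
              rw [← h3]; exact add_le_add h4 h2
          _ ≤ u + (2 * u + u) := by gcongr <;> linarith [hlamu, hρu]
          _ = 4 * u := by ring
      calc (lam * lJ) ^ (-(1/2:ℝ)) * |iteratedDeriv n Φ x|
          ≤ (lam * lJ) ^ (-(1/2:ℝ)) * (C * (lam * lJ) ^ (-(n:ℝ))) := by
            have := hbound n (hn.trans hMN) x
            exact mul_le_mul_of_nonneg_left this (Real.rpow_nonneg hP.le _)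
        _ = C * (lam * lJ) ^ (-(1/2:ℝ) - n) := by
            rw [show (-(1/2:ℝ) - n) = (-(1/2:ℝ)) + (-(n:ℝ)) by ring,
              Real.rpow_add hP]; ring
        _ ≤ 4 ^ N * C * R ^ (2 * (N:ℝ)) * (lJ / lI) ^ (θ * N / 4 - 1/2)
              * lam ^ (((N:ℝ) - 1) / 2) * lI ^ (-(1/2:ℝ) - n) * t ^ (-(M:ℝ)) := by
            rw [← Real.log_le_log_iff (by positivity) (by positivity)]
            have eL : Real.log (C * (lam * lJ) ^ (-(1/2:ℝ) - n))
                = Real.log C + (-(1/2:ℝ) - n) * (Real.log lam + Real.log lJ) := by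
              rw [Real.log_mul hC.ne' (Real.rpow_pos_of_pos hP _).ne',
                Real.log_rpow hP, Real.log_mul hlam0.ne' hlJ.ne']
            have eR : Real.log (4 ^ N * C * R ^ (2 * (N:ℝ)) * (lJ / lI) ^ (θ * N / 4 - 1/2)
                  * lam ^ (((N:ℝ) - 1) / 2) * lI ^ (-(1/2:ℝ) - n) * t ^ (-(M:ℝ)))
                = (N:ℝ) * Real.log 4 + Real.log C + (2 * (N:ℝ)) * Real.log R
                  + (θ * N / 4 - 1/2) * (Real.log lJ - Real.log lI)
                  + (((N:ℝ) - 1) / 2) * Real.log lam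
                  + (-(1/2:ℝ) - n) * Real.log lI + (-(M:ℝ)) * Real.log t := by
              rw [Real.log_mul (by positivity) (by positivity),
                Real.log_mul (by positivity) (by positivity),
                Real.log_mul (by positivity) (by positivity),
                Real.log_mul (by positivity) (by positivity),
                Real.log_mul (by positivity) (by positivity),
                Real.log_mul (by positivity) (by positivity),
                Real.log_pow, Real.log_rpow hR0, Real.log_rpow (by positivity),
                Real.log_rpow hlam0, Real.log_rpow hlI, Real.log_rpow ht0,
                Real.log_div hlJ.ne' hlI.ne']
              try push_cast
              try ring
            rw [eL, eR]
            have hlIJ : Real.log (lI / lJ) = Real.log lI - Real.log lJ :=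
              Real.log_div hlI.ne' hlJ.ne'
            have hlc0 : Real.log lJ ≤ Real.log lI := Real.log_le_log hlJ hlJI
            have hlr0 : 0 ≤ Real.log R := Real.log_nonneg (by linarith)
            have hl40 : (0:ℝ) ≤ Real.log 4 := Real.log_nonneg (by norm_num)
            have hrla0 : 0 ≤ Real.log R + Real.log lam := by
              rw [← Real.log_mul hR0.ne' hlam0.ne']
              exact Real.log_nonneg hRlam1
            have hf1 : θ * (Real.log lI - Real.log lJ) ≤ Real.log R + Real.log lam := by
              have h := Real.log_le_log (Real.rpow_pos_of_pos (by positivity) θ) hsRlam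
              rwa [Real.log_rpow (by positivity), Real.log_mul hR0.ne' hlam0.ne', hlIJ] at h
            have hlogu : Real.log u = (Real.log R + Real.log lam) / θ := by
              rw [hu, Real.log_rpow (by positivity), Real.log_mul hR0.ne' hlam0.ne']
              ring
            have hlogt : Real.log t ≤ Real.log 4 + Real.log u
                - (Real.log lI - Real.log lJ) := by
              have h : Real.log t ≤ Real.log (4 * u / (lI / lJ)) := Real.log_le_log ht0 ht4
              rwa [Real.log_div (by positivity) (by positivity),
                Real.log_mul (by norm_num) hu0.ne', hlIJ] at h
            have hMlu : (M:ℝ) * Real.log u ≤ ((N:ℝ)/4) * (Real.log R + Real.log lam) := by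
              rw [hlogu]
              have h := mul_le_mul_of_nonneg_right hMθ
                (by positivity : (0:ℝ) ≤ (Real.log R + Real.log lam) / θ)
              calc (M:ℝ) * ((Real.log R + Real.log lam) / θ)
                  ≤ (θ * N / 4) * ((Real.log R + Real.log lam) / θ) := h
                _ = ((N:ℝ)/4) * (Real.log R + Real.log lam) := by
                    field_simp
            have hMlt : (M:ℝ) * Real.log t ≤ (M:ℝ) * Real.log 4
                + ((N:ℝ)/4) * (Real.log R + Real.log lam)
                - (M:ℝ) * (Real.log lI - Real.log lJ) := by
              calc (M:ℝ) * Real.log t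
                  ≤ (M:ℝ) * (Real.log 4 + Real.log u - (Real.log lI - Real.log lJ)) :=
                    mul_le_mul_of_nonneg_left hlogt (Nat.cast_nonneg M)
                _ = (M:ℝ) * Real.log 4 + (M:ℝ) * Real.log u
                    - (M:ℝ) * (Real.log lI - Real.log lJ) := by ring
                _ ≤ _ := by linarith [hMlu]
            have hn0 : (0:ℝ) ≤ (n:ℝ) := Nat.cast_nonneg n
            have hnM : (n:ℝ) ≤ (M:ℝ) := by exact_mod_cast hn
            have hnN : (n:ℝ) ≤ (N:ℝ) := hnM.trans hMNr
            have hA : (0:ℝ) ≤ ((N:ℝ)/4 + n) * (Real.log R + Real.log lam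
                - θ * (Real.log lI - Real.log lJ)) :=
              mul_nonneg (by positivity) (by linarith)
            have hB : (0:ℝ) ≤ ((M:ℝ) - n + θ * n) * (Real.log lI - Real.log lJ) :=
              mul_nonneg (by linarith [mul_nonneg hθ.le hn0]) (by linarith)
            have hC2 : (0:ℝ) ≤ (3 * (N:ℝ)/2 - n) * Real.log R :=
              mul_nonneg (by linarith) hlr0
            have hD2 : (0:ℝ) ≤ ((N:ℝ) - M) * Real.log 4 :=
              mul_nonneg (by linarith) hl40
            have hsum := add_nonneg (add_nonneg (add_nonneg hA hB) hC2) hD2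
            linarith [hsum, hMlt]
end

section
/- Let L, S, D : [0,∞) → [0,∞) be monotone admissible functions (L non-increasing with L(x) → 0 as x → ∞, S non-decreasing with S(x) → 0 as x → 0, D non-increasing with D(x) → 0 as x → ∞). Define F(x,t,x',t') = (|t−t'|+|x−x'|)^ε / |t−x|^ε · L(|t−x|)·S(|t−x|)·D(|x+t|) on tuples with 2(|t−t'|+|x−x'|) < |t−x|, for some 0 < ε. Then F is bounded and: (a) F → 0 as |t−x| → ∞; (b) F → 0 as |t−t'|+|x−x'| → 0; (c) F → 0 as |x+t|/(1+|t−x|) → ∞. Consequently, a compact Calderón–Zygmund kernel with parameter δ satisfies, for any 0 < δ' < δ, a bound |K(t,x) − K(t',x')| ≤ C·(|t−t'|+|x−x'|)^{δ'}/|t−x|^{1+δ'}·L₁(|t−x|)·S₁(|t−t'|+|x−x'|)·D₁(1 + |t+x|/(1+|t−x|)) whenever 2(|t−t'|+|x−x'|) < |t−x|, where L₁, S₁, D₁ are admissible. -/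
open Filter

/-- The auxiliary function
`F(x,t,x',t') = ((|t−t'|+|x−x'|)^ε/|t−x|^ε) L(|t−x|) S(|t−x|) D(|x+t|)`. -/
noncomputable def Fker (L S D : ℝ → ℝ) (ε t x t' x' : ℝ) : ℝ :=
  ((|t - t'| + |x - x'|) ^ ε / |t - x| ^ ε) * (L |t - x| * S |t - x| * D |x + t|)

private lemma st16_mul4 {q a b c q' a' b' c' : ℝ} (h1 : q ≤ q') (h2 : a ≤ a')
    (h3 : b ≤ b') (h4 : c ≤ c') (n2 : 0 ≤ a) (n3 : 0 ≤ b) (n4 : 0 ≤ c) (n1 : 0 ≤ q)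
    (m1 : 0 ≤ q') (m2 : 0 ≤ a') (m3 : 0 ≤ b') :
    q * (a * b * c) ≤ q' * (a' * b' * c') := by
  have hab : a * b ≤ a' * b' := mul_le_mul h2 h3 n3 m2
  have habc : a * b * c ≤ a' * b' * c' := mul_le_mul hab h4 n4 (mul_nonneg m2 m3)
  exact mul_le_mul h1 habc (mul_nonneg (mul_nonneg n2 n3) n4) m1

private lemma st16_small_prod {M η q a b c : ℝ} (hM : 1 ≤ M) (hη : 0 ≤ η)
    (hq0 : 0 ≤ q) (hq1 : q ≤ 1) (ha0 : 0 ≤ a) (haM : a ≤ M) (hb0 : 0 ≤ b) (hbM : b ≤ M)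
    (hc0 : 0 ≤ c) (hcM : c ≤ M)
    (h : q ≤ η / (M*M*M) ∨ a ≤ η / (M*M*M) ∨ b ≤ η / (M*M*M) ∨ c ≤ η / (M*M*M)) :
    q * (a * b * c) ≤ η := by
  have hM0 : (0:ℝ) < M := lt_of_lt_of_le one_pos hM
  set E := η / (M*M*M) with hE
  have hMMM : (0:ℝ) < M*M*M := by positivity
  have hE0 : 0 ≤ E := div_nonneg hη hMMM.le
  have hEM : M*M*E ≤ η := by
    have h' : M*M*E = η/M := by rw [hE]; field_simp
    rw [h']; exact div_le_self hη hM
  have hEq : E*(M*M*M) ≤ η := by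
    have h' : E*(M*M*M) = η := by rw [hE]; field_simp
    rw [h']
  rcases h with h|h|h|h
  · exact le_trans (st16_mul4 h haM hbM hcM ha0 hb0 hc0 hq0 hE0 hM0.le hM0.le) hEq
  · refine le_trans (st16_mul4 hq1 h hbM hcM ha0 hb0 hc0 hq0 zero_le_one hE0 hM0.le) ?_
    have h2 : (1:ℝ)*(E*M*M) = M*M*E := by ring
    linarith
  · refine le_trans (st16_mul4 hq1 haM h hcM ha0 hb0 hc0 hq0 zero_le_one hM0.le hE0) ?_
    have h2 : (1:ℝ)*(M*E*M) = M*M*E := by ring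
    linarith
  · refine le_trans (st16_mul4 hq1 haM hbM h ha0 hb0 hc0 hq0 zero_le_one hM0.le hM0.le) ?_
    have h2 : (1:ℝ)*(M*M*E) = M*M*E := by ring
    linarith

/-- For monotone admissible `L, S, D`, the function `F` is bounded on the region
`2(|t−t'|+|x−x'|) < |t−x|` and tends to `0` as `|t−x| → ∞`, as
`|t−t'|+|x−x'| → 0`, and as `|x+t|/(1+|t−x|) → ∞`; consequently, a compact
Calderón–Zygmund kernel with parameter `δ` satisfies, for any `0 < δ' < δ`, the
refined smoothness bound with admissible functions `L₁, S₁, D₁`. -/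
theorem statement16 (L S D : ℝ → ℝ) (hadm : Admissible L S D)
    (hLmono : ∀ x y : ℝ, x ≤ y → L y ≤ L x)
    (hSmono : ∀ x y : ℝ, x ≤ y → S x ≤ S y)
    (hDmono : ∀ x y : ℝ, x ≤ y → D y ≤ D x)
    (ε : ℝ) (hε : 0 < ε) :
    ((∃ Bd : ℝ, ∀ t x t' x' : ℝ, 2 * (|t - t'| + |x - x'|) < |t - x| →
        Fker L S D ε t x t' x' ≤ Bd) ∧
      (∀ η > 0, ∃ R : ℝ, ∀ t x t' x' : ℝ, 2 * (|t - t'| + |x - x'|) < |t - x| →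
        R ≤ |t - x| → Fker L S D ε t x t' x' ≤ η) ∧
      (∀ η > 0, ∃ ρ > 0, ∀ t x t' x' : ℝ, 2 * (|t - t'| + |x - x'|) < |t - x| →
        |t - t'| + |x - x'| ≤ ρ → Fker L S D ε t x t' x' ≤ η) ∧
      (∀ η > 0, ∃ R : ℝ, ∀ t x t' x' : ℝ, 2 * (|t - t'| + |x - x'|) < |t - x| →
        R ≤ |x + t| / (1 + |t - x|) → Fker L S D ε t x t' x' ≤ η)) ∧
    (∀ (K : ℝ → ℝ → ℂ) (C δ : ℝ), 0 < C → 0 < δ → δ ≤ 1 →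
      (∀ t x t' x' : ℝ, 2 * (|t - t'| + |x - x'|) < |t - x| →
        ‖K t x - K t' x'‖ ≤
          C * ((|t - t'| + |x - x'|) ^ δ / |t - x| ^ (1 + δ)) *
            (L |t - x| * S |t - x| * D |t + x|)) →
      ∀ δ' : ℝ, 0 < δ' → δ' < δ →
        ∃ L₁ S₁ D₁ : ℝ → ℝ, Admissible L₁ S₁ D₁ ∧ ∃ C₁ > 0,
          ∀ t x t' x' : ℝ, 2 * (|t - t'| + |x - x'|) < |t - x| →
            ‖K t x - K t' x'‖ ≤
              C₁ * ((|t - t'| + |x - x'|) ^ δ' / |t - x| ^ (1 + δ')) *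
                (L₁ |t - x| * S₁ (|t - t'| + |x - x'|) *
                  D₁ (1 + |t + x| / (1 + |t - x|)))) := by
  obtain ⟨hL0, hS0, hD0, ⟨B, hB⟩, hLlim, hSlim, hDlim⟩ := hadm
  set M := max B 1 with hMdef
  have hM1 : (1:ℝ) ≤ M := le_max_right _ _
  have hM0 : (0:ℝ) < M := lt_of_lt_of_le one_pos hM1
  have hMMM : (0:ℝ) < M*M*M := by positivity
  have hLM : ∀ u, L u ≤ M := fun u => le_trans (hB u).1 (le_max_left _ _)
  have hSM : ∀ u, S u ≤ M := fun u => le_trans (hB u).2.1 (le_max_left _ _)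
  have hDM : ∀ u, D u ≤ M := fun u => le_trans (hB u).2.2 (le_max_left _ _)
  have hreg : ∀ t x t' x' : ℝ, 2 * (|t - t'| + |x - x'|) < |t - x| →
      0 ≤ |t - t'| + |x - x'| ∧ 0 < |t - x| ∧ |t - t'| + |x - x'| ≤ |t - x| := by
    intro t x t' x' h
    have hd0 : 0 ≤ |t - t'| + |x - x'| := add_nonneg (abs_nonneg _) (abs_nonneg _)
    exact ⟨hd0, by linarith, by linarith⟩
  have hq : ∀ t x t' x' : ℝ, 2 * (|t - t'| + |x - x'|) < |t - x| →
      0 ≤ (|t - t'| + |x - x'|) ^ ε / |t - x| ^ ε ∧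
      (|t - t'| + |x - x'|) ^ ε / |t - x| ^ ε ≤ 1 := by
    intro t x t' x' h
    obtain ⟨hd0, hr0, hdr⟩ := hreg t x t' x' h
    have h1 : (|t - t'| + |x - x'|) ^ ε ≤ |t - x| ^ ε := Real.rpow_le_rpow hd0 hdr hε.le
    have h2 : (0:ℝ) < |t - x| ^ ε := Real.rpow_pos_of_pos hr0 ε
    exact ⟨div_nonneg (Real.rpow_nonneg hd0 ε) h2.le, (div_le_one h2).2 h1⟩
  constructor
  · refine ⟨⟨M*M*M, ?_⟩, ?_, ?_, ?_⟩
    · -- boundedness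
      intro t x t' x' h
      obtain ⟨hq0, hq1⟩ := hq t x t' x' h
      show ((|t - t'| + |x - x'|) ^ ε / |t - x| ^ ε) *
          (L |t - x| * S |t - x| * D |x + t|) ≤ M*M*M
      calc ((|t - t'| + |x - x'|) ^ ε / |t - x| ^ ε) *
          (L |t - x| * S |t - x| * D |x + t|)
          ≤ 1 * (M * M * M) := st16_mul4 hq1 (hLM _) (hSM _) (hDM _)
            (hL0 _) (hS0 _) (hD0 _) hq0 zero_le_one hM0.le hM0.le
        _ = M*M*M := one_mul _
    · -- limit as |t - x| → ∞
      intro η hη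
      obtain ⟨R, hR⟩ := eventually_atTop.1
        ((tendsto_order.1 hLlim).2 (η/(M*M*M)) (div_pos hη hMMM))
      refine ⟨R, ?_⟩
      intro t x t' x' h hRr
      obtain ⟨hq0, hq1⟩ := hq t x t' x' h
      show ((|t - t'| + |x - x'|) ^ ε / |t - x| ^ ε) *
          (L |t - x| * S |t - x| * D |x + t|) ≤ η
      exact st16_small_prod hM1 hη.le hq0 hq1 (hL0 _) (hLM _) (hS0 _) (hSM _) (hD0 _) (hDM _)
        (Or.inr (Or.inl (hR _ hRr).le))
    · -- limit as |t - t'| + |x - x'| → 0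
      intro η hη
      have hE : 0 < η/(M*M*M) := div_pos hη hMMM
      obtain ⟨ρ₀, hρ₀, hSsmall⟩ := Metric.tendsto_nhdsWithin_nhds.1 hSlim _ hE
      set ρ := ρ₀/2 * min 1 ((η/(M*M*M)) ^ (1/ε)) with hρdef
      have hmin0 : 0 < min 1 ((η/(M*M*M)) ^ (1/ε)) :=
        lt_min one_pos (Real.rpow_pos_of_pos hE _)
      have hρpos : 0 < ρ := mul_pos (half_pos hρ₀) hmin0
      refine ⟨ρ, hρpos, ?_⟩
      intro t x t' x' h hdρ
      obtain ⟨hd0, hr0, hdr⟩ := hreg t x t' x' h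
      obtain ⟨hq0, hq1⟩ := hq t x t' x' h
      show ((|t - t'| + |x - x'|) ^ ε / |t - x| ^ ε) *
          (L |t - x| * S |t - x| * D |x + t|) ≤ η
      rcases lt_or_ge (|t - x|) ρ₀ with hcase | hcase
      · have hd := hSsmall (Set.mem_Ioi.2 hr0)
          (by rw [Real.dist_eq, sub_zero, abs_of_pos hr0]; exact hcase)
        rw [Real.dist_eq, sub_zero, abs_of_nonneg (hS0 _)] at hd
        exact st16_small_prod hM1 hη.le hq0 hq1 (hL0 _) (hLM _) (hS0 _) (hSM _) (hD0 _) (hDM _)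
          (Or.inr (Or.inr (Or.inl hd.le)))
      · -- quotient small
        have h1 : (|t - t'| + |x - x'|) ^ ε ≤ ρ ^ ε := Real.rpow_le_rpow hd0 hdρ hε.le
        have h2 : ρ₀ ^ ε ≤ |t - x| ^ ε := Real.rpow_le_rpow hρ₀.le hcase hε.le
        have hqle : (|t - t'| + |x - x'|) ^ ε / |t - x| ^ ε ≤ ρ ^ ε / ρ₀ ^ ε :=
          div_le_div₀ (Real.rpow_nonneg hρpos.le ε) h1 (Real.rpow_pos_of_pos hρ₀ ε) h2
        have hρle : ρ ≤ ρ₀ * ((η/(M*M*M)) ^ (1/ε)) := by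
          rw [hρdef]
          have := min_le_right 1 ((η/(M*M*M)) ^ (1/ε))
          nlinarith [Real.rpow_nonneg hE.le (1/ε), hρ₀]
        have hfinal : ρ ^ ε / ρ₀ ^ ε ≤ η/(M*M*M) := by
          have h3 : ρ ^ ε ≤ (ρ₀ * ((η/(M*M*M)) ^ (1/ε))) ^ ε :=
            Real.rpow_le_rpow hρpos.le hρle hε.le
          have h4 : (ρ₀ * ((η/(M*M*M)) ^ (1/ε))) ^ ε
              = ρ₀ ^ ε * (η/(M*M*M)) := by
            rw [Real.mul_rpow hρ₀.le (Real.rpow_nonneg hE.le _),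
              ← Real.rpow_mul hE.le]
            congr 1
            field_simp
            simp only [Real.rpow_one, pow_one]; field_simp
          rw [div_le_iff₀ (Real.rpow_pos_of_pos hρ₀ ε)]
          calc ρ ^ ε ≤ ρ₀ ^ ε * (η/(M*M*M)) := h4 ▸ h3
            _ = η/(M*M*M) * ρ₀ ^ ε := by ring
        exact st16_small_prod hM1 hη.le hq0 hq1 (hL0 _) (hLM _) (hS0 _) (hSM _) (hD0 _) (hDM _)
          (Or.inl (hqle.trans hfinal))
    · -- limit as |x + t| / (1 + |t - x|) → ∞
      intro η hη
      obtain ⟨R₀, hR₀⟩ := eventually_atTop.1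
        ((tendsto_order.1 hDlim).2 (η/(M*M*M)) (div_pos hη hMMM))
      refine ⟨max R₀ 0, ?_⟩
      intro t x t' x' h hs
      obtain ⟨hd0, hr0, hdr⟩ := hreg t x t' x' h
      obtain ⟨hq0, hq1⟩ := hq t x t' x' h
      have hzq : |x + t| / (1 + |t - x|) ≤ |x + t| :=
        div_le_self (abs_nonneg _) (by linarith [abs_nonneg (t - x)])
      have hRz : R₀ ≤ |x + t| := le_trans (le_max_left R₀ 0) (le_trans hs hzq)
      show ((|t - t'| + |x - x'|) ^ ε / |t - x| ^ ε) *
          (L |t - x| * S |t - x| * D |x + t|) ≤ η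
      exact st16_small_prod hM1 hη.le hq0 hq1 (hL0 _) (hLM _) (hS0 _) (hSM _) (hD0 _) (hDM _)
        (Or.inr (Or.inr (Or.inr (hR₀ _ hRz).le)))
  · -- part 2
    intro K C δ hC hδ hδ1 hK δ' hδ'0 hδ'δ
    set θ := δ - δ' with hθdef
    have hθ : 0 < θ := sub_pos.2 hδ'δ
    set S₁ : ℝ → ℝ := fun v => M * min 1 (|v| ^ (θ/4)) + S (Real.sqrt |v|) with hS₁def
    set D₁ : ℝ → ℝ := fun w => D (w - 1) with hD₁def
    have hS₁0 : ∀ v, 0 ≤ S₁ v := by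
      intro v
      rw [hS₁def]
      exact add_nonneg (mul_nonneg hM0.le
        (le_min zero_le_one (Real.rpow_nonneg (abs_nonneg _) _))) (hS0 _)
    refine ⟨L, S₁, D₁, ⟨hL0, hS₁0, fun w => hD0 _, ⟨2*M, ?_⟩, hLlim, ?_, ?_⟩, C, hC, ?_⟩
    · -- boundedness of L, S₁, D₁
      intro v
      refine ⟨by linarith [hLM v], ?_, by simp only [hD₁def]; linarith [hDM (v - 1)]⟩
      rw [hS₁def]
      have h1 : M * min 1 (|v| ^ (θ/4)) ≤ M * 1 :=
        mul_le_mul_of_nonneg_left (min_le_left _ _) hM0.le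
      have h2 := hSM (Real.sqrt |v|)
      simp only []
      linarith
    · -- S₁ tendsto
      rw [hS₁def]
      have h1 : Tendsto (fun v : ℝ => M * min 1 (|v| ^ (θ/4)))
          (nhdsWithin 0 (Set.Ioi 0)) (nhds 0) := by
        have hc : ContinuousAt (fun v : ℝ => M * min 1 (|v| ^ (θ/4))) 0 := by
          apply ContinuousAt.mul continuousAt_const
          apply ContinuousAt.inf continuousAt_const
          have hrp : ContinuousAt (fun u : ℝ => u ^ (θ/4)) (|(0:ℝ)|) :=
            Real.continuousAt_rpow_const _ _ (Or.inr (by positivity))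
          exact hrp.comp continuous_abs.continuousAt
        have h0 : M * min 1 (|(0:ℝ)| ^ (θ/4)) = 0 := by
          simp [Real.zero_rpow (by positivity : θ/4 ≠ 0)]
        have := hc.tendsto
        rw [h0] at this
        exact this.mono_left nhdsWithin_le_nhds
      have h2 : Tendsto (fun v : ℝ => S (Real.sqrt |v|))
          (nhdsWithin 0 (Set.Ioi 0)) (nhds 0) := by
        apply hSlim.comp
        rw [tendsto_nhdsWithin_iff]
        constructor
        · have hc : Tendsto (fun v : ℝ => Real.sqrt |v|) (nhds 0) (nhds (Real.sqrt |0|)) :=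
            (Real.continuous_sqrt.comp continuous_abs).tendsto 0
          simpa using hc.mono_left nhdsWithin_le_nhds
        · filter_upwards [self_mem_nhdsWithin] with v hv
          exact Set.mem_Ioi.2 (Real.sqrt_pos.2 (abs_pos.2 (ne_of_gt hv)))
      simpa using h1.add h2
    · -- D₁ tendsto
      rw [hD₁def]
      have h1 : Tendsto (fun w : ℝ => w - 1) atTop atTop :=
        tendsto_atTop_add_const_right atTop (-1) tendsto_id
      exact hDlim.comp h1
    · -- the main estimate
      intro t x t' x' h
      have hKb := hK t x t' x' h
      set d := |t - t'| + |x - x'| with hd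
      set r := |t - x| with hr
      set z := |t + x| with hz
      have hd0 : 0 ≤ d := by rw [hd]; exact add_nonneg (abs_nonneg _) (abs_nonneg _)
      have hr0 : 0 < r := by
        have : 0 ≤ 2 * d := by linarith
        linarith
      have hdr : d ≤ r := by linarith
      have hz0 : 0 ≤ z := by rw [hz]; exact abs_nonneg _
      set s := z / (1 + r) with hs
      have hsz : s ≤ z := by
        rw [hs]; exact div_le_self hz0 (by linarith)
      have hDzs : D z ≤ D s := hDmono s z hsz
      have hD₁s : D₁ (1 + s) = D s := by
        rw [hD₁def]
        simp only []
        norm_num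
      rcases eq_or_lt_of_le hd0 with hdz | hdp
      · -- d = 0
        have hL' : ‖K t x - K t' x'‖ ≤ 0 := by
          refine le_trans hKb ?_
          rw [← hdz, Real.zero_rpow hδ.ne']
          simp
        refine le_trans hL' ?_
        apply mul_nonneg (mul_nonneg hC.le (div_nonneg (Real.rpow_nonneg hd0 _)
          (Real.rpow_nonneg hr0.le _)))
        exact mul_nonneg (mul_nonneg (hL0 r) (hS₁0 d)) (hD0 _)
      · -- d > 0
        set w2 := d ^ (θ/2) / r ^ (θ/2) with hw2
        have hθ2 : (0:ℝ) ≤ θ/2 := by positivity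
        have hw20 : 0 ≤ w2 := div_nonneg (Real.rpow_nonneg hd0 _) (Real.rpow_nonneg hr0.le _)
        have hw21 : w2 ≤ 1 := by
          rw [hw2]
          exact (div_le_one (Real.rpow_pos_of_pos hr0 _)).2
            (Real.rpow_le_rpow hd0 hdr hθ2)
        have habsd : |d| = d := abs_of_nonneg hd0
        -- Claim A : w2 * S r ≤ S₁ d
        have hA : w2 * S r ≤ S₁ d := by
          rcases le_total r (Real.sqrt d) with hc | hc
          · have h1 : S r ≤ S (Real.sqrt d) := hSmono _ _ hc
            have h2 : w2 * S r ≤ 1 * S (Real.sqrt d) :=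
              mul_le_mul hw21 h1 (hS0 _) zero_le_one
            rw [one_mul] at h2
            refine le_trans h2 ?_
            rw [hS₁def]
            simp only [habsd]
            exact le_add_of_nonneg_left (mul_nonneg hM0.le
              (le_min zero_le_one (Real.rpow_nonneg hd0 _)))
          · have hsd : 0 < Real.sqrt d := Real.sqrt_pos.2 hdp
            have h1 : (Real.sqrt d) ^ (θ/2) ≤ r ^ (θ/2) :=
              Real.rpow_le_rpow hsd.le hc hθ2
            have h2 : w2 ≤ d ^ (θ/2) / (Real.sqrt d) ^ (θ/2) := by
              rw [hw2]
              exact div_le_div_of_nonneg_left (Real.rpow_nonneg hd0 _)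
                (Real.rpow_pos_of_pos hsd _) h1
            have h3 : d ^ (θ/2) / (Real.sqrt d) ^ (θ/2) = d ^ (θ/4) := by
              rw [Real.sqrt_eq_rpow, ← Real.rpow_mul hd0, ← Real.rpow_sub hdp]
              congr 1
              ring
            have h4 : w2 ≤ min 1 (d ^ (θ/4)) := le_min hw21 (h2.trans_eq h3)
            calc w2 * S r ≤ min 1 (d ^ (θ/4)) * M :=
                mul_le_mul h4 (hSM r) (hS0 r)
                  (le_min zero_le_one (Real.rpow_nonneg hd0 _))
              _ ≤ S₁ d := by
                rw [hS₁def]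
                simp only [habsd]
                rw [mul_comm]
                exact le_add_of_nonneg_right (hS0 _)
        have hB : w2 * D z ≤ 1 * D s := mul_le_mul hw21 hDzs (hD0 _) zero_le_one
        have key : w2 * w2 * (L r * S r * D z) ≤ L r * S₁ d * D s := by
          calc w2 * w2 * (L r * S r * D z) = L r * ((w2 * S r) * (w2 * D z)) := by ring
            _ ≤ L r * (S₁ d * (1 * D s)) :=
              mul_le_mul_of_nonneg_left
                (mul_le_mul hA hB (mul_nonneg hw20 (hD0 _)) (hS₁0 _)) (hL0 r)
            _ = L r * S₁ d * D s := by ring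
        have h1 : d ^ δ = d ^ δ' * (d ^ (θ/2) * d ^ (θ/2)) := by
          rw [← Real.rpow_add hdp, ← Real.rpow_add hdp]
          congr 1
          rw [hθdef]; ring
        have h2 : r ^ (1 + δ) = r ^ (1 + δ') * (r ^ (θ/2) * r ^ (θ/2)) := by
          rw [← Real.rpow_add hr0, ← Real.rpow_add hr0]
          congr 1
          rw [hθdef]; ring
        calc ‖K t x - K t' x'‖ ≤ C * (d ^ δ / r ^ (1 + δ)) * (L r * S r * D z) := hKb
          _ = C * (d ^ δ' / r ^ (1 + δ')) * (w2 * w2 * (L r * S r * D z)) := by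
            rw [h1, h2, hw2]
            have hrne : r ^ (1 + δ') ≠ 0 := (Real.rpow_pos_of_pos hr0 _).ne'
            have hrne2 : r ^ (θ/2) ≠ 0 := (Real.rpow_pos_of_pos hr0 _).ne'
            field_simp
          _ ≤ C * (d ^ δ' / r ^ (1 + δ')) * (L r * S₁ d * D s) :=
            mul_le_mul_of_nonneg_left key
              (mul_nonneg hC.le (div_nonneg (Real.rpow_nonneg hd0 _)
                (Real.rpow_nonneg hr0.le _)))
          _ = C * (d ^ δ' / r ^ (1 + δ')) * (L r * S₁ d * D₁ (1 + s)) := by rw [hD₁s]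
end

section
/- Let b ∈ BMO(ℝ), let (ψ_I)_{I dyadic} be a wavelet basis of L²(ℝ) with each ψ_I supported in I, L²-adapted with |ψ_I| ≲ |I|^{−1/2}, and let (φ_I) be L¹-normalized bumps with |φ_I(t)| ≲ |I|^{−1} w_I(t)^{−N} and |φ_I'(t)| ≲ |I|^{−2} w_I(t)^{−N}. Define the paraproduct kernel K(t,x) = Σ_{I dyadic} ⟨b, ψ_I⟩ φ_I(t) ψ_I(x), where for t ≠ x the sum is over the dyadic intervals I containing t, x (finitely indexed by scales above the smallest dyadic interval I_{t,x} containing both). Then K satisfies the standard Calderón–Zygmund smoothness estimate |K(t,x) − K(t',x)| ≲ ‖b‖_{BMO}·|t−t'|/|t−x|² whenever 2|t−t'| < |t−x|. -/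
open Function Set


lemma aux_geom (C a : ℝ) (hC : 0 ≤ C) (ha : 0 < a) (f : ℤ → ℝ)
    (hf : ∀ j : ℤ, |f j| ≤ if (2:ℝ) ^ j < a then C * (2:ℝ) ^ j else 0) :
    Summable f ∧ ∑' j, |f j| ≤ 2 * C * a := by
  obtain ⟨n, hn1, hn2⟩ := exists_mem_Ioc_zpow ha one_lt_two
  set e : ℕ → ℤ := fun m => n - m with he
  have hinj : Function.Injective e := by
    intro m m' h
    simp only [e] at h
    omega
  have hvan : ∀ j : ℤ, ¬ ((2:ℝ) ^ j < a) → f j = 0 := by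
    intro j h
    have h1 := hf j
    rw [if_neg h] at h1
    exact abs_nonpos_iff.mp h1
  have hrange : ∀ j : ℤ, f j ≠ 0 → j ∈ Set.range e := by
    intro j hj
    have h : (2:ℝ) ^ j < a := by
      by_contra h; exact hj (hvan j h)
    have hjn : j ≤ n := by
      have : (2:ℝ) ^ j < (2:ℝ) ^ (n + 1) := lt_of_lt_of_le h hn2
      have := (zpow_lt_zpow_iff_right₀ (one_lt_two (α := ℝ))).mp this
      omega
    exact ⟨(n - j).toNat, by simp only [e]; omega⟩
  have key : ∀ m : ℕ, (2:ℝ) ^ (n - (m:ℤ)) = 2 ^ n * (2⁻¹) ^ m := by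
    intro m
    rw [zpow_sub₀ (two_ne_zero), zpow_natCast, div_eq_mul_inv, inv_pow]
  have hg : Summable (fun m : ℕ => C * (2:ℝ) ^ n * (2⁻¹) ^ m) :=
    (summable_geometric_of_lt_one (by norm_num) (by norm_num)).mul_left _
  have hle : ∀ m : ℕ, |f (e m)| ≤ C * (2:ℝ) ^ n * (2⁻¹) ^ m := by
    intro m
    have h1 := hf (e m)
    have h2 : C * (2:ℝ) ^ (n - (m:ℤ)) = C * (2:ℝ) ^ n * (2⁻¹) ^ m := by
      rw [key, mul_assoc]
    by_cases h : (2:ℝ) ^ (e m) < a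
    · rw [if_pos h] at h1
      calc |f (e m)| ≤ C * (2:ℝ) ^ (e m) := h1
        _ = C * (2:ℝ) ^ n * (2⁻¹) ^ m := by rw [← h2]
    · rw [if_neg h] at h1
      have : |f (e m)| = 0 := le_antisymm h1 (abs_nonneg _)
      rw [this]; positivity
  have habs : Summable (fun m : ℕ => |f (e m)|) :=
    Summable.of_nonneg_of_le (fun m => abs_nonneg _) hle hg
  have hfe : Summable (f ∘ e) := by
    apply Summable.of_norm
    simpa [Real.norm_eq_abs] using habs
  have hzero : ∀ j ∉ Set.range e, f j = 0 := by
    intro j hj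
    by_contra h
    exact hj (hrange j h)
  have hsumf : Summable f := (hinj.summable_iff hzero).mp hfe
  refine ⟨hsumf, ?_⟩
  have hsupp : Function.support (fun j => |f j|) ⊆ Set.range e := by
    intro j hj
    exact hrange j (fun h => hj (by simp [Function.mem_support.mp, h]))
  have heq : ∑' m : ℕ, |f (e m)| = ∑' j : ℤ, |f j| := hinj.tsum_eq hsupp
  rw [← heq]
  calc ∑' m : ℕ, |f (e m)| ≤ ∑' m : ℕ, C * (2:ℝ) ^ n * (2⁻¹) ^ m :=
        Summable.tsum_le_tsum hle habs hg
    _ = C * (2:ℝ) ^ n * (1 - 2⁻¹)⁻¹ := by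
        rw [tsum_mul_left, tsum_geometric_of_lt_one (by norm_num) (by norm_num)]
    _ = 2 * C * (2:ℝ) ^ n := by rw [show ((1:ℝ) - 2⁻¹)⁻¹ = 2 by norm_num]; ring
    _ ≤ 2 * C * a := by nlinarith [hn1]


lemma aux_pair (C a x : ℝ) (hC : 0 ≤ C) (ha : 0 < a) (F : ℤ × ℤ → ℝ)
    (hsupp : ∀ q : ℤ × ℤ, F q ≠ 0 →
      x ∈ Set.Icc ((2:ℝ) ^ (-q.1) * q.2) ((2:ℝ) ^ (-q.1) * (q.2 + 1)))
    (hbd : ∀ q : ℤ × ℤ, |F q| ≤ if (2:ℝ) ^ q.1 < a then C * (2:ℝ) ^ q.1 else 0) :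
    Summable F ∧ |∑' q, F q| ≤ 4 * C * a := by
  classical
  set e₀ : ℤ → ℤ × ℤ := fun j => (j, ⌊x * 2 ^ j⌋) with he0
  set e₁ : ℤ → ℤ × ℤ := fun j => (j, ⌊x * 2 ^ j⌋ - 1) with he1
  have hinj0 : Function.Injective e₀ := fun j j' h => (Prod.mk.injEq _ _ _ _ ▸ h : _ ∧ _).1
  have hinj1 : Function.Injective e₁ := fun j j' h => (Prod.mk.injEq _ _ _ _ ▸ h : _ ∧ _).1
  have hcover : ∀ q : ℤ × ℤ, F q ≠ 0 → q ∈ Set.range e₀ ∪ Set.range e₁ := by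
    intro q hq
    obtain ⟨h1, h2⟩ := hsupp q hq
    obtain ⟨j, k⟩ := q
    simp only at h1 h2
    have hp : (0:ℝ) < 2 ^ j := zpow_pos two_pos j
    have hmul : (2:ℝ) ^ j * (2:ℝ) ^ (-j) = 1 := by
      rw [← zpow_add₀ (two_ne_zero)]; simp
    have hk1 : (k:ℝ) ≤ x * 2 ^ j := by
      have := mul_le_mul_of_nonneg_left h1 hp.le
      calc (k:ℝ) = (2:ℝ) ^ j * ((2:ℝ) ^ (-j) * k) - ((2:ℝ)^j * (2:ℝ)^(-j) - 1) * k := by ring_nf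
        _ = (2:ℝ) ^ j * ((2:ℝ) ^ (-j) * k) := by rw [hmul]; ring
        _ ≤ (2:ℝ) ^ j * x := this
        _ = x * 2 ^ j := by ring
    have hk2 : x * 2 ^ j ≤ (k:ℝ) + 1 := by
      have := mul_le_mul_of_nonneg_left h2 hp.le
      calc x * 2 ^ j = (2:ℝ) ^ j * x := by ring
        _ ≤ (2:ℝ) ^ j * ((2:ℝ) ^ (-j) * (k + 1)) := this
        _ = ((k:ℝ) + 1) + ((2:ℝ)^j * (2:ℝ)^(-j) - 1) * (k+1) := by ring_nf
        _ = (k:ℝ) + 1 := by rw [hmul]; ring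
    have hfl1 : k ≤ ⌊x * 2 ^ j⌋ := Int.le_floor.mpr hk1
    have hfl2 : ⌊x * 2 ^ j⌋ ≤ k + 1 := by
      have : x * 2 ^ j ≤ ((k + 1 : ℤ) : ℝ) := by push_cast; exact hk2
      calc ⌊x * 2 ^ j⌋ ≤ ⌊((k + 1 : ℤ) : ℝ)⌋ := Int.floor_le_floor this
        _ = k + 1 := Int.floor_intCast _
    rcases eq_or_lt_of_le hfl1 with h | h
    · exact Or.inl ⟨j, by simp [e₀, ← h]⟩
    · exact Or.inr ⟨j, by have hk : ⌊x * 2 ^ j⌋ - 1 = k := (by omega); show (j, ⌊x * 2 ^ j⌋ - 1) = (j, k); rw [hk]⟩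
  set F0 : ℤ × ℤ → ℝ := (Set.range e₀).indicator F with hF0
  set F1 : ℤ × ℤ → ℝ := (Set.range e₁ \ Set.range e₀).indicator F with hF1
  have hsplit : F = F0 + F1 := by
    funext q
    by_cases h0 : q ∈ Set.range e₀
    · have : q ∉ Set.range e₁ \ Set.range e₀ := fun h => h.2 h0
      simp [F0, F1, Set.indicator_of_mem h0, Set.indicator_of_notMem this]
    · by_cases h1 : q ∈ Set.range e₁
      · have : q ∈ Set.range e₁ \ Set.range e₀ := ⟨h1, h0⟩
        simp [F0, F1, Set.indicator_of_notMem h0, Set.indicator_of_mem this]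
      · have hFq : F q = 0 := by
          by_contra h
          rcases hcover q h with h' | h'
          · exact h0 h'
          · exact h1 h'
        have : q ∉ Set.range e₁ \ Set.range e₀ := fun h => h1 h.1
        simp [F0, F1, Set.indicator_of_notMem h0, Set.indicator_of_notMem this, hFq]
  have habs0 : ∀ q, |F0 q| ≤ |F q| := by
    intro q
    by_cases h : q ∈ Set.range e₀
    · simp [F0, Set.indicator_of_mem h]
    · simp [F0, Set.indicator_of_notMem h, abs_nonneg]
  have habs1 : ∀ q, |F1 q| ≤ |F q| := by
    intro q
    by_cases h : q ∈ Set.range e₁ \ Set.range e₀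
    · simp [F1, Set.indicator_of_mem h]
    · simp [F1, Set.indicator_of_notMem h, abs_nonneg]
  have hbd0 : ∀ j : ℤ, |F0 (e₀ j)| ≤ if (2:ℝ) ^ j < a then C * (2:ℝ) ^ j else 0 :=
    fun j => le_trans (habs0 _) (hbd (e₀ j))
  have hbd1 : ∀ j : ℤ, |F1 (e₁ j)| ≤ if (2:ℝ) ^ j < a then C * (2:ℝ) ^ j else 0 :=
    fun j => le_trans (habs1 _) (hbd (e₁ j))
  obtain ⟨hs0, ht0⟩ := aux_geom C a hC ha (F0 ∘ e₀) hbd0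
  obtain ⟨hs1, ht1⟩ := aux_geom C a hC ha (F1 ∘ e₁) hbd1
  have hsupp0 : Function.support F0 ⊆ Set.range e₀ := Set.support_indicator_subset
  have hsupp1 : Function.support F1 ⊆ Set.range e₁ := by
    refine subset_trans Set.support_indicator_subset ?_
    exact Set.diff_subset
  have hz0 : ∀ q ∉ Set.range e₀, F0 q = 0 := fun q hq => by
    by_contra h; exact hq (hsupp0 h)
  have hz1 : ∀ q ∉ Set.range e₁, F1 q = 0 := fun q hq => by
    by_contra h; exact hq (hsupp1 h)
  have hSum0 : Summable F0 := (hinj0.summable_iff hz0).mp hs0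
  have hSum1 : Summable F1 := (hinj1.summable_iff hz1).mp hs1
  have hSumF : Summable F := by rw [hsplit]; exact hSum0.add hSum1
  refine ⟨hSumF, ?_⟩
  have htsum : ∑' q, F q = (∑' q, F0 q) + ∑' q, F1 q := by
    rw [hsplit]; exact Summable.tsum_add hSum0 hSum1
  have hb0 : |∑' q, F0 q| ≤ 2 * C * a := by
    rw [← hinj0.tsum_eq hsupp0]
    calc |∑' j, F0 (e₀ j)| ≤ ∑' j, |F0 (e₀ j)| := by
          have := norm_tsum_le_tsum_norm (f := F0 ∘ e₀) (by simpa [Real.norm_eq_abs] using hs0.abs)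
          simpa [Real.norm_eq_abs] using this
      _ ≤ 2 * C * a := ht0
  have hb1 : |∑' q, F1 q| ≤ 2 * C * a := by
    rw [← hinj1.tsum_eq hsupp1]
    calc |∑' j, F1 (e₁ j)| ≤ ∑' j, |F1 (e₁ j)| := by
          have := norm_tsum_le_tsum_norm (f := F1 ∘ e₁) (by simpa [Real.norm_eq_abs] using hs1.abs)
          simpa [Real.norm_eq_abs] using this
      _ ≤ 2 * C * a := ht1
  rw [htsum]
  calc |(∑' q, F0 q) + ∑' q, F1 q| ≤ |∑' q, F0 q| + |∑' q, F1 q| := abs_add_le _ _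
    _ ≤ 2 * C * a + 2 * C * a := add_le_add hb0 hb1
    _ = 4 * C * a := by ring


/-- The paraproduct kernel `K(t,x) = Σ_I ⟨b,ψ_I⟩ φ_I(t) ψ_I(x)` built from BMO
coefficients `β(j,k) = ⟨b, ψ_{j,k}⟩` (so `|β| ≲ ‖b‖_BMO |I|^{1/2}`), wavelets `ψ_I`
supported in `I` with `|ψ_I| ≲ |I|^{−1/2}`, and `L¹`-normalized bumps `φ_I` supported
in `I` with `|φ_I| ≲ |I|⁻¹ w_I^{−N}` and `|φ_I'| ≲ |I|⁻² w_I^{−N}`, satisfies the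
standard Calderón–Zygmund smoothness bound
`|K(t,x) − K(t',x)| ≲ ‖b‖_BMO |t−t'|/|t−x|²` whenever `2|t−t'| < |t−x|`. -/
theorem statement19
    (B Cb Cw Cφ : ℝ) (hB : 0 ≤ B) (hCb : 0 < Cb) (hCw : 0 < Cw) (hCφ : 0 < Cφ)
    (NN : ℕ) (β : ℤ × ℤ → ℝ) (ψ φf : ℤ × ℤ → ℝ → ℝ)
    (hβ : ∀ q : ℤ × ℤ, |β q| ≤ Cb * B * ((2 : ℝ) ^ (-q.1)) ^ (1/2 : ℝ))
    (hψbd : ∀ (q : ℤ × ℤ) (x : ℝ), |ψ q x| ≤ Cw * ((2 : ℝ) ^ (-q.1)) ^ (-(1/2 : ℝ)))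
    (hψsupp : ∀ q : ℤ × ℤ, Function.support (ψ q) ⊆
      Set.Icc ((2 : ℝ) ^ (-q.1) * q.2) ((2 : ℝ) ^ (-q.1) * (q.2 + 1)))
    (hφdiff : ∀ q : ℤ × ℤ, Differentiable ℝ (φf q))
    (hφbd : ∀ (q : ℤ × ℤ) (x : ℝ), |φf q x| ≤
      Cφ / (2 : ℝ) ^ (-q.1) *
        (1 + |x - (2 : ℝ) ^ (-q.1) * (q.2 + 1/2)| / (2 : ℝ) ^ (-q.1)) ^ (-(NN : ℝ)))
    (hφ'bd : ∀ (q : ℤ × ℤ) (x : ℝ), |deriv (φf q) x| ≤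
      Cφ / ((2 : ℝ) ^ (-q.1)) ^ 2 *
        (1 + |x - (2 : ℝ) ^ (-q.1) * (q.2 + 1/2)| / (2 : ℝ) ^ (-q.1)) ^ (-(NN : ℝ)))
    (hφsupp : ∀ q : ℤ × ℤ, Function.support (φf q) ⊆
      Set.Icc ((2 : ℝ) ^ (-q.1) * q.2) ((2 : ℝ) ^ (-q.1) * (q.2 + 1))) :
    ∃ A > 0, ∀ t x t' : ℝ, 2 * |t - t'| < |t - x| →
      |(∑' q : ℤ × ℤ, β q * φf q t * ψ q x) -
          (∑' q : ℤ × ℤ, β q * φf q t' * ψ q x)|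
        ≤ A * B * |t - t'| / |t - x| ^ 2 := by
  refine ⟨16 * Cb * Cw * Cφ, by positivity, ?_⟩
  intro t x t' hlt
  set d := |t - x| with hd
  set δ := |t - t'| with hδ
  have hδ0 : 0 ≤ δ := abs_nonneg _
  have hd0 : 0 < d := lt_of_le_of_lt (by positivity) hlt
  have ha : (0:ℝ) < 2 / d := by positivity
  -- basic facts about the scale
  have hℓpos : ∀ j : ℤ, (0:ℝ) < (2:ℝ) ^ (-j) := fun j => zpow_pos two_pos _
  have hjpos : ∀ j : ℤ, (0:ℝ) < (2:ℝ) ^ j := fun j => zpow_pos two_pos _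
  -- uniform bound on |β q * y * ψ q x|
  have hterm : ∀ (q : ℤ × ℤ) (y : ℝ), |β q * y * ψ q x| ≤ Cb * B * Cw * |y| := by
    intro q y
    have hℓ := hℓpos q.1
    have hr12 : ((2:ℝ) ^ (-q.1)) ^ (1/2:ℝ) * ((2:ℝ) ^ (-q.1)) ^ (-(1/2):ℝ) = 1 := by
      rw [← Real.rpow_add hℓ]; norm_num
    have hr1 : (0:ℝ) ≤ ((2:ℝ) ^ (-q.1)) ^ (1/2:ℝ) := Real.rpow_nonneg hℓ.le _
    have hr2 : (0:ℝ) ≤ ((2:ℝ) ^ (-q.1)) ^ (-(1/2):ℝ) := Real.rpow_nonneg hℓ.le _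
    have e1 : |β q * y * ψ q x| = |β q| * |y| * |ψ q x| := by rw [abs_mul, abs_mul]
    rw [e1]
    have hstep : |β q| * |y| * |ψ q x| ≤
        (Cb * B * ((2:ℝ) ^ (-q.1)) ^ (1/2:ℝ)) * |y| * (Cw * ((2:ℝ) ^ (-q.1)) ^ (-(1/2):ℝ)) := by
      have h1 : |β q| * |y| ≤ (Cb * B * ((2:ℝ) ^ (-q.1)) ^ (1/2:ℝ)) * |y| :=
        mul_le_mul_of_nonneg_right (hβ q) (abs_nonneg y)
      exact mul_le_mul h1 (hψbd q x) (abs_nonneg _)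
        (mul_nonneg (mul_nonneg (mul_nonneg hCb.le hB) hr1) (abs_nonneg y))
    calc |β q| * |y| * |ψ q x|
        ≤ (Cb * B * ((2:ℝ) ^ (-q.1)) ^ (1/2:ℝ)) * |y| * (Cw * ((2:ℝ) ^ (-q.1)) ^ (-(1/2):ℝ)) :=
          hstep
      _ = Cb * B * Cw * |y| *
          (((2:ℝ) ^ (-q.1)) ^ (1/2:ℝ) * ((2:ℝ) ^ (-q.1)) ^ (-(1/2):ℝ)) := by ring
      _ = Cb * B * Cw * |y| := by rw [hr12, mul_one]
  -- φ bound without weight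
  have hφ1 : ∀ (q : ℤ × ℤ) (y : ℝ), |φf q y| ≤ Cφ * (2:ℝ) ^ q.1 := by
    intro q y
    have hℓ := hℓpos q.1
    have hw : (1 + |y - (2:ℝ) ^ (-q.1) * (q.2 + 1/2)| / (2:ℝ) ^ (-q.1)) ^ (-(NN:ℝ)) ≤ 1 :=
      Real.rpow_le_one_of_one_le_of_nonpos
        (le_add_of_nonneg_right (by positivity)) (neg_nonpos.mpr (Nat.cast_nonneg _))
    have h1 := hφbd q y
    have h2 : Cφ / (2:ℝ) ^ (-q.1) *
        (1 + |y - (2:ℝ) ^ (-q.1) * (q.2 + 1/2)| / (2:ℝ) ^ (-q.1)) ^ (-(NN:ℝ))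
        ≤ Cφ / (2:ℝ) ^ (-q.1) * 1 := mul_le_mul_of_nonneg_left hw (by positivity)
    have h3 : Cφ / (2:ℝ) ^ (-q.1) * 1 = Cφ * (2:ℝ) ^ q.1 := by
      rw [mul_one, div_eq_mul_inv, ← zpow_neg, neg_neg]
    linarith
  -- φ' bound without weight
  have hφ'1 : ∀ (q : ℤ × ℤ) (y : ℝ), |deriv (φf q) y| ≤ Cφ * ((2:ℝ) ^ q.1) ^ 2 := by
    intro q y
    have hℓ := hℓpos q.1
    have hw : (1 + |y - (2:ℝ) ^ (-q.1) * (q.2 + 1/2)| / (2:ℝ) ^ (-q.1)) ^ (-(NN:ℝ)) ≤ 1 :=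
      Real.rpow_le_one_of_one_le_of_nonpos
        (le_add_of_nonneg_right (by positivity)) (neg_nonpos.mpr (Nat.cast_nonneg _))
    have h1 := hφ'bd q y
    have h2 : Cφ / ((2:ℝ) ^ (-q.1)) ^ 2 *
        (1 + |y - (2:ℝ) ^ (-q.1) * (q.2 + 1/2)| / (2:ℝ) ^ (-q.1)) ^ (-(NN:ℝ))
        ≤ Cφ / ((2:ℝ) ^ (-q.1)) ^ 2 * 1 := mul_le_mul_of_nonneg_left hw (by positivity)
    have h3 : Cφ / ((2:ℝ) ^ (-q.1)) ^ 2 * 1 = Cφ * ((2:ℝ) ^ q.1) ^ 2 := by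
      rw [mul_one, div_eq_mul_inv, ← inv_pow, ← zpow_neg, neg_neg]
    linarith
  -- mean value theorem
  have hMVT : ∀ q : ℤ × ℤ, |φf q t - φf q t'| ≤ Cφ * ((2:ℝ) ^ q.1) ^ 2 * δ := by
    intro q
    have := Convex.norm_image_sub_le_of_norm_deriv_le (s := Set.univ) (f := φf q)
      (fun y _ => (hφdiff q y)) (fun y _ => by simpa [Real.norm_eq_abs] using hφ'1 q y)
      convex_univ (Set.mem_univ t') (Set.mem_univ t)
    simpa [Real.norm_eq_abs, hδ] using this
  -- cutoff
  have hcut : ∀ (q : ℤ × ℤ) (t₀ : ℝ), d / 2 < |t₀ - x| →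
      φf q t₀ ≠ 0 → ψ q x ≠ 0 → (2:ℝ) ^ q.1 < 2 / d := by
    intro q t₀ ht₀ hφ hψ'
    have hxI := hψsupp q (Function.mem_support.mpr hψ')
    have htI := hφsupp q (Function.mem_support.mpr hφ)
    obtain ⟨ha1, ha2⟩ := hxI
    obtain ⟨hb1, hb2⟩ := htI
    have hring : (2:ℝ) ^ (-q.1) * (q.2 + 1) - (2:ℝ) ^ (-q.1) * q.2 = (2:ℝ) ^ (-q.1) := by ring
    have hdist : |t₀ - x| ≤ (2:ℝ) ^ (-q.1) := by
      rw [abs_sub_le_iff]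
      constructor <;> linarith
    have hd2ℓ : d / 2 < (2:ℝ) ^ (-q.1) := lt_of_lt_of_le ht₀ hdist
    have h2 : (2:ℝ) ^ q.1 = ((2:ℝ) ^ (-q.1))⁻¹ := by rw [← zpow_neg, neg_neg]
    rw [h2, show (2:ℝ) / d = (d / 2)⁻¹ from (inv_div d 2).symm]
    exact inv_strictAnti₀ (by positivity) hd2ℓ
  have ht : d / 2 < |t - x| := by rw [← hd]; linarith
  have ht' : d / 2 < |t' - x| := by
    have htri : |t - x| ≤ |t - t'| + |t' - x| := abs_sub_le t t' x
    rw [← hd, ← hδ] at htri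
    linarith
  set C₀ : ℝ := Cb * B * Cw * Cφ with hC₀def
  have hC₀ : 0 ≤ C₀ := mul_nonneg (mul_nonneg (mul_nonneg hCb.le hB) hCw.le) hCφ.le
  -- summability of each kernel sum
  have main : ∀ t₀ : ℝ, d / 2 < |t₀ - x| →
      Summable (fun q : ℤ × ℤ => β q * φf q t₀ * ψ q x) := by
    intro t₀ ht₀
    refine (aux_pair C₀ (2 / d) x hC₀ ha _ ?_ ?_).1
    · intro q hq
      have hψ' : ψ q x ≠ 0 := fun hz => hq (by simp [hz])
      exact hψsupp q (Function.mem_support.mpr hψ')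
    · intro q
      by_cases h : (2:ℝ) ^ q.1 < 2 / d
      · rw [if_pos h]
        calc |β q * φf q t₀ * ψ q x| ≤ Cb * B * Cw * |φf q t₀| := hterm q _
          _ ≤ Cb * B * Cw * (Cφ * (2:ℝ) ^ q.1) :=
            mul_le_mul_of_nonneg_left (hφ1 q t₀)
              (mul_nonneg (mul_nonneg hCb.le hB) hCw.le)
          _ = C₀ * (2:ℝ) ^ q.1 := by rw [hC₀def]; ring
      · rw [if_neg h]
        have hz : β q * φf q t₀ * ψ q x = 0 := by
          by_contra hne
          have hφ : φf q t₀ ≠ 0 := fun hz => hne (by simp [hz])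
          have hψ' : ψ q x ≠ 0 := fun hz => hne (by simp [hz])
          exact h (hcut q t₀ ht₀ hφ hψ')
        rw [hz, abs_zero]
  -- the difference function
  set C₁ : ℝ := C₀ * δ * (2 / d) with hC₁def
  have hC₁ : 0 ≤ C₁ := by
    apply mul_nonneg (mul_nonneg hC₀ hδ0) ha.le
  have hdiff := aux_pair C₁ (2 / d) x hC₁ ha
      (fun q : ℤ × ℤ => β q * φf q t * ψ q x - β q * φf q t' * ψ q x) ?_ ?_
  · rw [← Summable.tsum_sub (main t ht) (main t' ht')]
    calc |∑' q : ℤ × ℤ, (β q * φf q t * ψ q x - β q * φf q t' * ψ q x)|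
        ≤ 4 * C₁ * (2 / d) := hdiff.2
      _ = 16 * Cb * Cw * Cφ * B * δ / d ^ 2 := by
          rw [hC₁def, hC₀def]; field_simp; ring
  · intro q hq
    have hψ' : ψ q x ≠ 0 := fun hz => hq (by simp [hz])
    exact hψsupp q (Function.mem_support.mpr hψ')
  · intro q
    show |β q * φf q t * ψ q x - β q * φf q t' * ψ q x| ≤
      if (2:ℝ) ^ q.1 < 2 / d then C₁ * (2:ℝ) ^ q.1 else 0
    by_cases h : (2:ℝ) ^ q.1 < 2 / d
    · rw [if_pos h]
      have hfac : β q * φf q t * ψ q x - β q * φf q t' * ψ q x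
          = β q * (φf q t - φf q t') * ψ q x := by ring
      rw [hfac]
      have hCbBCw : (0:ℝ) ≤ Cb * B * Cw := mul_nonneg (mul_nonneg hCb.le hB) hCw.le
      calc |β q * (φf q t - φf q t') * ψ q x|
          ≤ Cb * B * Cw * |φf q t - φf q t'| := hterm q _
        _ ≤ Cb * B * Cw * (Cφ * ((2:ℝ) ^ q.1) ^ 2 * δ) :=
            mul_le_mul_of_nonneg_left (hMVT q) hCbBCw
        _ = (C₀ * δ * (2:ℝ) ^ q.1) * (2:ℝ) ^ q.1 := by rw [hC₀def]; ring
        _ ≤ (C₀ * δ * (2 / d)) * (2:ℝ) ^ q.1 := by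
            apply mul_le_mul_of_nonneg_right _ (hjpos q.1).le
            exact mul_le_mul_of_nonneg_left h.le (mul_nonneg hC₀ hδ0)
        _ = C₁ * (2:ℝ) ^ q.1 := by rw [hC₁def]
    · rw [if_neg h]
      have hz : β q * φf q t * ψ q x - β q * φf q t' * ψ q x = 0 := by
        by_contra hne
        have hψ' : ψ q x ≠ 0 := fun hz => hne (by simp [hz])
        have hφor : φf q t ≠ 0 ∨ φf q t' ≠ 0 := by
          by_contra hboth
          push_neg at hboth
          exact hne (by rw [hboth.1, hboth.2]; ring)
        rcases hφor with hφ | hφ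
        · exact h (hcut q t ht hφ hψ')
        · exact h (hcut q t' ht' hφ hψ')
      rw [hz, abs_zero]
end
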